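/- arXiv:1303.0581 — 7 statements merged into one kernel-verified Lean document; each statement's English description precedes it below -/
import Mathlib

section
/- Let 0 ≤ i ≤ j ≤ L be integers with L ≥ 1, and let D, E ∈ {0,2}^L be (i,j,L)-admissible words that differ in at most one position. Then the concatenated word DE of length 2L is (i,j,L)-admissible. -/
/-!
Words over the alphabet {0,2} are modeled as `List Bool`, where `true` represents the
symbol `2` and `false` represents the symbol `0`.
-/

/-- The number of occurrences of the symbol `2` in the window of length `L`
starting at position `m` of the word `w`. -/
def winCount (w : List Bool) (m L : ℕ) : ℕ := ((w.drop m).take L).count true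

/-- A finite word `w` over `{0,2}` is `(i,j,L)`-admissible if every sub-word of `L`
consecutive letters contains at least `i` and at most `j` occurrences of the symbol `2`. -/
def Admissible (i j L : ℕ) (w : List Bool) : Prop :=
  ∀ m, m + L ≤ w.length → i ≤ winCount w m L ∧ winCount w m L ≤ j

lemma take_eq_of_agree (D E : List Bool) (L m : ℕ) (hD : D.length = L) (hE : E.length = L)
    (hm : m ≤ L) (h : ∀ k < m, D.getD k false = E.getD k false) :
    D.take m = E.take m := by
  apply List.ext_getElem
  · simp [hD, hE]
  · intro k h1 h2
    have hk : k < m := by simp [hD] at h1; omega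
    have hkD : k < D.length := by omega
    have hkE : k < E.length := by omega
    have := h k hk
    rw [List.getD_eq_getElem D false hkD, List.getD_eq_getElem E false hkE] at this
    simpa [List.getElem_take] using this

lemma drop_eq_of_agree (D E : List Bool) (L m : ℕ) (hD : D.length = L) (hE : E.length = L)
    (hm : m ≤ L) (h : ∀ k, m ≤ k → k < L → D.getD k false = E.getD k false) :
    D.drop m = E.drop m := by
  apply List.ext_getElem
  · simp [hD, hE]
  · intro k h1 h2
    have hk : m + k < L := by simp [hD] at h1; omega
    have hkD : m + k < D.length := by omega
    have hkE : m + k < E.length := by omega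
    have := h (m + k) (by omega) hk
    rw [List.getD_eq_getElem D false hkD, List.getD_eq_getElem E false hkE] at this
    simpa [List.getElem_drop] using this

/-- if `D, E ∈ {0,2}^L` are `(i,j,L)`-admissible words differing in at most
one position, then the concatenation `DE` is `(i,j,L)`-admissible. -/
theorem concat_admissible_of_differ_at_most_one
    (i j L : ℕ) (hL : 1 ≤ L) (hij : i ≤ j) (hjL : j ≤ L)
    (D E : List Bool) (hD : D.length = L) (hE : E.length = L)
    (hDa : Admissible i j L D) (hEa : Admissible i j L E)
    (hdiff : ((Finset.range L).filter fun m => D.getD m false ≠ E.getD m false).card ≤ 1) :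
    Admissible i j L (D ++ E) := by
  intro m hm
  have hlen : (D ++ E).length = L + L := by simp [hD, hE]
  rw [hlen] at hm
  have hmL : m ≤ L := by omega
  -- compute the window
  have hwin : winCount (D ++ E) m L = (D.drop m).count true + (E.take m).count true := by
    unfold winCount
    rw [List.drop_append_of_le_length (by omega)]
    rw [List.take_append]
    have h1 : (D.drop m).length = L - m := by simp [hD]
    rw [List.take_of_length_le (by omega), h1]
    have : L - (L - m) = m := by omega
    rw [this, List.count_append]
  have hDfull : winCount D 0 L = D.count true := by
    unfold winCount
    simp [List.take_of_length_le, hD.le]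
  have hEfull : winCount E 0 L = E.count true := by
    unfold winCount
    simp [List.take_of_length_le, hE.le]
  have hDb := hDa 0 (by omega)
  have hEb := hEa 0 (by omega)
  rw [hDfull] at hDb
  rw [hEfull] at hEb
  by_cases hagree : ∀ k < m, D.getD k false = E.getD k false
  · have ht := take_eq_of_agree D E L m hD hE hmL hagree
    have hc : (D.take m).count true + (D.drop m).count true = D.count true := by
      rw [← List.count_append, List.take_append_drop]
    have : winCount (D ++ E) m L = D.count true := by rw [hwin, ← ht]; omega
    rw [this]; exact hDb
  · push_neg at hagree
    obtain ⟨p, hp, hpd⟩ := hagree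
    have hagree2 : ∀ k, m ≤ k → k < L → D.getD k false = E.getD k false := by
      intro k hk1 hk2
      by_contra hkd
      have hsub : ({p, k} : Finset ℕ) ⊆
          (Finset.range L).filter fun n => D.getD n false ≠ E.getD n false := by
        intro x hx
        simp only [Finset.mem_insert, Finset.mem_singleton] at hx
        rcases hx with rfl | rfl
        · exact Finset.mem_filter.mpr ⟨Finset.mem_range.mpr (by omega), hpd⟩
        · exact Finset.mem_filter.mpr ⟨Finset.mem_range.mpr hk2, hkd⟩
      have hcard : ({p, k} : Finset ℕ).card = 2 := by
        rw [Finset.card_insert_of_notMem (by simp; omega), Finset.card_singleton]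
      have := Finset.card_le_card hsub
      omega
    have hd := drop_eq_of_agree D E L m hD hE hmL hagree2
    have hc : (E.take m).count true + (E.drop m).count true = E.count true := by
      rw [← List.count_append, List.take_append_drop]
    have : winCount (D ++ E) m L = E.count true := by rw [hwin, hd]; omega
    rw [this]; exact hEb
end

section
/- Let 0 ≤ i < j ≤ L be integers and let A, B ∈ {0,2}^L be (i,j,L)-admissible words. Then there exist an integer n with 0 ≤ n ≤ 2·min(j, L−i) and (i,j,L)-admissible words D₀ = A, D₁, …, D_n = B in {0,2}^L such that for each 0 ≤ m < n the words D_m and D_{m+1} differ in at most one position. -/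
/-- Two words (of length `L`) differ in at most one of the positions `0, …, L-1`. -/
def DifferAtMostOne (L : ℕ) (u v : List Bool) : Prop :=
  ((Finset.range L).filter fun m => u.getD m false ≠ v.getD m false).card ≤ 1

def dS (L : ℕ) (u v : List Bool) : Finset ℕ :=
  (Finset.range L).filter fun m => u.getD m false ≠ v.getD m false

lemma count_eq_card (w : List Bool) :
    w.count true = ((Finset.range w.length).filter (fun m => w.getD m false = true)).card := by
  induction w with
  | nil => simp
  | cons b t ih =>
    rw [Finset.card_filter] at *
    rw [List.length_cons, Finset.sum_range_succ']
    simp only [List.getD_cons_succ, List.getD_cons_zero]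
    rw [List.count_cons, ih]
    cases b <;> simp

lemma dS_comm (L : ℕ) (u v : List Bool) : dS L u v = dS L v u := by
  simp [dS, ne_comm]

lemma exists_true_snd {L : ℕ} {A B : List Bool} (hA : A.length = L) (hB : B.length = L)
    (hab : A.count true ≤ B.count true) (hne : (dS L A B).Nonempty) :
    ∃ k ∈ dS L A B, B.getD k false = true := by
  by_contra h
  push_neg at h
  obtain ⟨k0, hk0⟩ := hne
  have hk0' := hk0
  simp only [dS, Finset.mem_filter, Finset.mem_range] at hk0'
  have hBk0 : B.getD k0 false = false := by
    have := h k0 hk0; simpa using this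
  have hAk0 : A.getD k0 false = true := by
    rcases Bool.eq_false_or_eq_true (A.getD k0 false) with ht | hf
    · exact ht
    · exact absurd (hf.trans hBk0.symm) hk0'.2
  set TA := (Finset.range L).filter (fun m => A.getD m false = true) with hTA
  set TB := (Finset.range L).filter (fun m => B.getD m false = true) with hTB
  have hsub : TB ⊆ TA.erase k0 := by
    intro m hm
    simp only [hTB, Finset.mem_filter, Finset.mem_range] at hm
    have hmk : m ≠ k0 := by
      rintro rfl; rw [hm.2] at hBk0; exact absurd hBk0 (by simp)
    have hmd : m ∉ dS L A B := by
      intro hmd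
      have := h m hmd
      exact this hm.2
    simp only [dS, Finset.mem_filter, Finset.mem_range, not_and, not_not] at hmd
    have hAm : A.getD m false = true := (hmd hm.1).trans hm.2
    exact Finset.mem_erase.mpr ⟨hmk, Finset.mem_filter.mpr ⟨Finset.mem_range.mpr hm.1, hAm⟩⟩
  have hk0TA : k0 ∈ TA := Finset.mem_filter.mpr ⟨Finset.mem_range.mpr hk0'.1, hAk0⟩
  have h1 : TB.card ≤ TA.card - 1 := by
    calc TB.card ≤ (TA.erase k0).card := Finset.card_le_card hsub
    _ = TA.card - 1 := Finset.card_erase_of_mem hk0TA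
  have h2 : 1 ≤ TA.card := Finset.card_pos.mpr ⟨k0, hk0TA⟩
  have hca : A.count true = TA.card := by rw [count_eq_card, hA]
  have hcb : B.count true = TB.card := by rw [count_eq_card, hB]
  omega

lemma exists_true_fst {L : ℕ} {A B : List Bool} (hA : A.length = L) (hB : B.length = L)
    (hab : B.count true ≤ A.count true) (hne : (dS L A B).Nonempty) :
    ∃ k ∈ dS L A B, A.getD k false = true := by
  rw [dS_comm] at hne ⊢
  exact exists_true_snd hB hA hab hne

lemma count_set (w : List Bool) (k : ℕ) (c : Bool) (hk : k < w.length) :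
    (w.set k c).count true + (if w.getD k false then 1 else 0)
      = w.count true + (if c then 1 else 0) := by
  induction w generalizing k with
  | nil => simp at hk
  | cons b t ih =>
    cases k with
    | zero => cases b <;> cases c <;> simp [List.count_cons]
    | succ k =>
      simp only [List.set_cons_succ, List.count_cons, List.getD_cons_succ]
      have := ih k (by simpa using hk)
      omega

lemma step_lemma {i j L : ℕ} (hij : i < j) {A B : List Bool}
    (hA : A.length = L) (hB : B.length = L)
    (hAa : i ≤ A.count true ∧ A.count true ≤ j)
    (hBa : i ≤ B.count true ∧ B.count true ≤ j)
    (hne : (dS L A B).Nonempty) :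
    ∃ k ∈ dS L A B,
      i ≤ (A.set k (B.getD k false)).count true ∧
      (A.set k (B.getD k false)).count true ≤ j := by
  rcases lt_trichotomy (A.count true) (B.count true) with hlt | heq | hgt
  · obtain ⟨k, hk, hBk⟩ := exists_true_snd hA hB hlt.le hne
    refine ⟨k, hk, ?_⟩
    have hk' : k < A.length := by
      simp only [dS, Finset.mem_filter, Finset.mem_range] at hk; omega
    have hAk : A.getD k false = false := by
      simp only [dS, Finset.mem_filter, Finset.mem_range] at hk
      rcases Bool.eq_false_or_eq_true (A.getD k false) with ht | hf
      · exact absurd (ht.trans hBk.symm) hk.2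
      · exact hf
    rw [hBk]
    have := count_set A k (B.getD k false) hk'
    rw [hAk, hBk] at this
    norm_num at this
    omega
  · rcases Nat.lt_or_ge (A.count true) j with haj | haj
    · obtain ⟨k, hk, hBk⟩ := exists_true_snd hA hB heq.le hne
      refine ⟨k, hk, ?_⟩
      have hk' : k < A.length := by
        simp only [dS, Finset.mem_filter, Finset.mem_range] at hk; omega
      have hAk : A.getD k false = false := by
        simp only [dS, Finset.mem_filter, Finset.mem_range] at hk
        rcases Bool.eq_false_or_eq_true (A.getD k false) with ht | hf
        · exact absurd (ht.trans hBk.symm) hk.2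
        · exact hf
      rw [hBk]
      have := count_set A k (B.getD k false) hk'
      rw [hAk, hBk] at this
      norm_num at this
      omega
    · obtain ⟨k, hk, hAk⟩ := exists_true_fst hA hB heq.ge hne
      refine ⟨k, hk, ?_⟩
      have hk' : k < A.length := by
        simp only [dS, Finset.mem_filter, Finset.mem_range] at hk; omega
      have hBk : B.getD k false = false := by
        simp only [dS, Finset.mem_filter, Finset.mem_range] at hk
        rcases Bool.eq_false_or_eq_true (B.getD k false) with ht | hf
        · exact absurd (hAk.trans ht.symm) hk.2
        · exact hf
      rw [hBk]
      have := count_set A k (B.getD k false) hk'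
      rw [hAk, hBk] at this
      norm_num at this
      omega
  · obtain ⟨k, hk, hAk⟩ := exists_true_fst hA hB hgt.le hne
    refine ⟨k, hk, ?_⟩
    have hk' : k < A.length := by
      simp only [dS, Finset.mem_filter, Finset.mem_range] at hk; omega
    have hBk : B.getD k false = false := by
      simp only [dS, Finset.mem_filter, Finset.mem_range] at hk
      rcases Bool.eq_false_or_eq_true (B.getD k false) with ht | hf
      · exact absurd (hAk.trans ht.symm) hk.2
      · exact hf
    rw [hBk]
    have := count_set A k (B.getD k false) hk'
    rw [hAk, hBk] at this
    norm_num at this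
    omega

lemma chain_lemma {i j L : ℕ} (hij : i < j) :
    ∀ d : ℕ, ∀ A B : List Bool, A.length = L → B.length = L →
      (i ≤ A.count true ∧ A.count true ≤ j) → (i ≤ B.count true ∧ B.count true ≤ j) →
      (dS L A B).card = d →
      ∃ D : ℕ → List Bool, D 0 = A ∧ D d = B ∧
        (∀ m ≤ d, (D m).length = L ∧ i ≤ (D m).count true ∧ (D m).count true ≤ j) ∧
        ∀ m < d, DifferAtMostOne L (D m) (D (m + 1)) := by
  intro d
  induction d with
  | zero =>
    intro A B hA hB hAa hBa hcard
    have hemp : dS L A B = ∅ := Finset.card_eq_zero.mp hcard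
    have hAB : A = B := by
      apply List.ext_getElem (hA.trans hB.symm)
      intro m h1 h2
      have hm : m ∉ dS L A B := by rw [hemp]; simp
      simp only [dS, Finset.mem_filter, Finset.mem_range, not_and, not_not] at hm
      have := hm (by omega)
      rwa [List.getD_eq_getElem _ _ h1, List.getD_eq_getElem _ _ h2] at this
    exact ⟨fun _ => A, rfl, hAB ▸ rfl, fun m _ => ⟨hA, hAa⟩, fun m hm => absurd hm (by omega)⟩
  | succ d ih =>
    intro A B hA hB hAa hBa hcard
    have hne : (dS L A B).Nonempty := Finset.card_pos.mp (by omega)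
    obtain ⟨k, hk, hC⟩ := step_lemma hij hA hB hAa hBa hne
    set C := A.set k (B.getD k false) with hCdef
    have hkmem := hk
    simp only [dS, Finset.mem_filter, Finset.mem_range] at hkmem
    have hkA : k < A.length := by omega
    have hClen : C.length = L := by rw [hCdef, List.length_set, hA]
    have hCk : C.getD k false = B.getD k false := by
      rw [hCdef]; simp [List.getD_eq_getElem?_getD, List.getElem?_set_self, hkA]
    have hCm : ∀ m, m ≠ k → C.getD m false = A.getD m false := fun m hm => by
      rw [hCdef]; simp [List.getD_eq_getElem?_getD, List.getElem?_set_ne (Ne.symm hm)]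
    have hdS : dS L C B = (dS L A B).erase k := by
      ext m
      simp only [dS, Finset.mem_erase, Finset.mem_filter, Finset.mem_range]
      by_cases hmk : m = k
      · subst hmk
        constructor
        · rintro ⟨-, h⟩; exact absurd hCk h
        · rintro ⟨h, -⟩; exact absurd rfl h
      · rw [hCm m hmk]; tauto
    have hcard' : (dS L C B).card = d := by
      rw [hdS, Finset.card_erase_of_mem hk]; omega
    obtain ⟨D', hD0, hDd, hDall, hDstep⟩ := ih C B hClen hB hC hBa hcard'
    refine ⟨fun m => if m = 0 then A else D' (m - 1), by simp, by simp [hDd], ?_, ?_⟩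
    · intro m hm
      cases m with
      | zero => simpa using ⟨hA, hAa⟩
      | succ n => simpa using hDall n (by omega)
    · intro m hm
      cases m with
      | zero =>
        simp only [if_pos rfl, if_neg (Nat.one_ne_zero), Nat.sub_self, hD0]
        unfold DifferAtMostOne
        have hsub : ((Finset.range L).filter fun m => A.getD m false ≠ C.getD m false) ⊆ {k} := by
          intro m hm'
          simp only [Finset.mem_filter, Finset.mem_range] at hm'
          simp only [Finset.mem_singleton]
          by_contra hmk
          exact hm'.2 (hCm m hmk).symm
        calc ((Finset.range L).filter fun m => A.getD m false ≠ C.getD m false).card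
            ≤ ({k} : Finset ℕ).card := Finset.card_le_card hsub
          _ = 1 := Finset.card_singleton k
      | succ n =>
        have h1 : n + 1 ≠ 0 := Nat.succ_ne_zero n
        have h2 : n + 1 + 1 ≠ 0 := Nat.succ_ne_zero _
        simp only [if_neg h1, if_neg h2, Nat.add_sub_cancel]
        have := hDstep n (by omega)
        simpa using this

lemma adm_iff {i j L : ℕ} {w : List Bool} (hw : w.length = L) :
    Admissible i j L w ↔ i ≤ w.count true ∧ w.count true ≤ j := by
  have ht : w.take L = w := List.take_of_length_le (by omega)
  constructor
  · intro h
    have := h 0 (by omega)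
    simpa [winCount, ht] using this
  · intro h m hm
    have hm0 : m = 0 := by omega
    subst hm0
    simpa [winCount, ht] using h

lemma dS_card_le {i j L : ℕ} {A B : List Bool} (hiL : i ≤ L)
    (hA : A.length = L) (hB : B.length = L)
    (hAc : i ≤ A.count true ∧ A.count true ≤ j)
    (hBc : i ≤ B.count true ∧ B.count true ≤ j) :
    (dS L A B).card ≤ 2 * min j (L - i) := by
  set TA := (Finset.range L).filter (fun m => A.getD m false = true) with hTAdef
  set TB := (Finset.range L).filter (fun m => B.getD m false = true) with hTBdef
  set FA := (Finset.range L).filter (fun m => ¬A.getD m false = true) with hFAdef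
  set FB := (Finset.range L).filter (fun m => ¬B.getD m false = true) with hFBdef
  have hcA : A.count true = TA.card := by rw [count_eq_card, hA]
  have hcB : B.count true = TB.card := by rw [count_eq_card, hB]
  have hsA : TA.card + FA.card = L := by
    rw [hTAdef, hFAdef, Finset.card_filter_add_card_filter_not, Finset.card_range]
  have hsB : TB.card + FB.card = L := by
    rw [hTBdef, hFBdef, Finset.card_filter_add_card_filter_not, Finset.card_range]
  have h1 : dS L A B ⊆ TA ∪ TB := by
    intro m hm
    simp only [dS, Finset.mem_filter, Finset.mem_range] at hm
    rw [Finset.mem_union, hTAdef, hTBdef]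
    simp only [Finset.mem_filter, Finset.mem_range]
    by_cases hAm : A.getD m false = true
    · exact Or.inl ⟨hm.1, hAm⟩
    · refine Or.inr ⟨hm.1, ?_⟩
      rcases Bool.eq_false_or_eq_true (B.getD m false) with ht | hf
      · exact ht
      · rw [Bool.not_eq_true] at hAm
        exact absurd (hAm.trans hf.symm) hm.2
  have h2 : dS L A B ⊆ FA ∪ FB := by
    intro m hm
    simp only [dS, Finset.mem_filter, Finset.mem_range] at hm
    rw [Finset.mem_union, hFAdef, hFBdef]
    simp only [Finset.mem_filter, Finset.mem_range]
    by_cases hAm : A.getD m false = true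
    · refine Or.inr ⟨hm.1, ?_⟩
      rw [Bool.not_eq_true]
      rcases Bool.eq_false_or_eq_true (B.getD m false) with ht | hf
      · exact absurd (hAm.trans ht.symm) hm.2
      · exact hf
    · exact Or.inl ⟨hm.1, hAm⟩
  have e1 : (dS L A B).card ≤ TA.card + TB.card :=
    le_trans (Finset.card_le_card h1) (Finset.card_union_le _ _)
  have e2 : (dS L A B).card ≤ FA.card + FB.card :=
    le_trans (Finset.card_le_card h2) (Finset.card_union_le _ _)
  rcases Nat.le_total j (L - i) with h | h
  · rw [min_eq_left h]; omega
  · rw [min_eq_right h]; omega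


/-- any two `(i,j,L)`-admissible words `A, B ∈ {0,2}^L` can be joined by a
chain `D₀ = A, D₁, …, D_n = B` of at most `2·min(j, L−i)` steps of `(i,j,L)`-admissible
words of length `L`, consecutive ones differing in at most one position. -/
theorem chain_between_admissible_words
    (i j L : ℕ) (hij : i < j) (hjL : j ≤ L)
    (A B : List Bool) (hA : A.length = L) (hB : B.length = L)
    (hAa : Admissible i j L A) (hBa : Admissible i j L B) :
    ∃ n ≤ 2 * min j (L - i), ∃ D : ℕ → List Bool,
      D 0 = A ∧ D n = B ∧
      (∀ m ≤ n, (D m).length = L ∧ Admissible i j L (D m)) ∧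
      ∀ m < n, DifferAtMostOne L (D m) (D (m + 1)) := by
  have hAc := (adm_iff hA).mp hAa
  have hBc := (adm_iff hB).mp hBa
  obtain ⟨D, hD0, hDn, hDall, hDstep⟩ :=
    chain_lemma hij ((dS L A B).card) A B hA hB hAc hBc rfl
  refine ⟨(dS L A B).card, dS_card_le (by omega) hA hB hAc hBc, D, hD0, hDn, ?_, hDstep⟩
  intro m hm
  obtain ⟨hlen, hcnt⟩ := hDall m hm
  exact ⟨hlen, (adm_iff hlen).mpr hcnt⟩
end

section
/- Let 0 ≤ i < j ≤ L be integers with L ≥ 1. Then H(i,j,L) is nonempty and the left shift σ restricted to H(i,j,L) is topologically mixing: for every pair of nonempty relatively open subsets U, V of H(i,j,L) there exists N ∈ ℕ such that σ^{−n}(U) ∩ V ≠ ∅ for all n ≥ N. -/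
/-!
Bi-infinite sequences over the alphabet {0,2} are modeled as `ξ : ℤ → Bool`, where
`true` represents the symbol `2` and `false` represents the symbol `0`.  The space
`ℤ → Bool` carries the product topology (with `Bool` discrete).
-/

/-- Number of occurrences of the symbol `2` in the window `ξ_m ξ_{m+1} ⋯ ξ_{m+L-1}`. -/
def zwinCount (ξ : ℤ → Bool) (m : ℤ) (L : ℕ) : ℕ :=
  ((Finset.range L).filter fun r : ℕ => ξ (m + (r : ℤ)) = true).card

/-- The subshift `H(i,j,L)`: sequences all of whose windows of length `L` contain at
least `i` and at most `j` occurrences of the symbol `2`. -/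
def Hset (i j L : ℕ) : Set (ℤ → Bool) :=
  {ξ | ∀ m : ℤ, i ≤ zwinCount ξ m L ∧ zwinCount ξ m L ≤ j}

/-- The left shift on `{0,2}^ℤ`. -/
def shift (ξ : ℤ → Bool) : ℤ → Bool := fun n => ξ (n + 1)


lemma zwin_succ (ξ : ℤ → Bool) (m : ℤ) (L : ℕ) :
    zwinCount ξ m (L+1) = zwinCount ξ m L + (if ξ (m + L) then 1 else 0) := by
  unfold zwinCount
  rw [Finset.range_add_one, Finset.filter_insert]
  split <;> rename_i h
  · rw [Finset.card_insert_of_notMem (by simp)]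
  · rfl

lemma zwin_add (ξ : ℤ → Bool) (a : ℤ) (k l : ℕ) :
    zwinCount ξ a (k + l) = zwinCount ξ a k + zwinCount ξ (a + k) l := by
  induction l with
  | zero => simp [zwinCount]
  | succ l ih =>
      have h : k + (l + 1) = (k + l) + 1 := by omega
      rw [h, zwin_succ, ih, zwin_succ]
      have : a + ↑(k + l) = a + ↑k + ↑l := by push_cast; ring
      rw [this, add_assoc]

lemma zwin_one (ξ : ℤ → Bool) (a : ℤ) :
    zwinCount ξ a 1 = if ξ a then 1 else 0 := by
  have := zwin_succ ξ a 0
  simpa [zwinCount] using this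

/-- steps in {0,1} -/
def SStep (S : ℤ → ℤ) : Prop := ∀ t : ℤ, S t = S (t-1) ∨ S t = S (t-1) + 1

/-- valid counting function for H(i,j,L) -/
def SValid (i j L : ℕ) (S : ℤ → ℤ) : Prop :=
  SStep S ∧ ∀ m : ℤ, (i : ℤ) ≤ S (m + L) - S m ∧ S (m + L) - S m ≤ j

def toSeq (S : ℤ → ℤ) : ℤ → Bool := fun t => decide (S t = S (t-1) + 1)

lemma toSeq_count {S : ℤ → ℤ} (hS : SStep S) (m : ℤ) (L : ℕ) :
    (zwinCount (toSeq S) m L : ℤ) = S (m - 1 + L) - S (m - 1) := by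
  induction L with
  | zero => simp [zwinCount]
  | succ L ih =>
      rw [zwin_succ]
      have h1 : m - 1 + (L:ℤ) = m + L - 1 := by ring
      have h2 : m - 1 + ((L:ℤ) + 1) = m + L := by ring
      rw [h1] at ih
      have key : (if toSeq S (m + L) then (1:ℤ) else 0) = S (m + L) - S (m + L - 1) := by
        rcases hS (m + L) with hst | hst
        · rw [if_neg (by simp [toSeq, hst]), hst]; ring
        · rw [if_pos (by simp [toSeq, hst]), hst]; ring
      push_cast
      rw [h2]
      omega

lemma toSeq_mem {i j L : ℕ} {S : ℤ → ℤ} (hS : SValid i j L S) : toSeq S ∈ Hset i j L := by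
  intro m
  have h := toSeq_count hS.1 m L
  have h2 := hS.2 (m - 1)
  rw [show m - 1 + (L:ℤ) = m - 1 + L from rfl] at h
  constructor <;> omega

/-- cumulative counting function of a boolean sequence -/
def Sfun (ξ : ℤ → Bool) (t : ℤ) : ℤ :=
  if 0 ≤ t then (zwinCount ξ 1 t.toNat : ℤ) else -(zwinCount ξ (t+1) (-t).toNat : ℤ)

lemma Sfun_step (ξ : ℤ → Bool) (t : ℤ) :
    Sfun ξ t = Sfun ξ (t-1) + (if ξ t then 1 else 0) := by
  rcases le_or_gt 1 t with h | h
  · rw [Sfun, Sfun, if_pos (by omega), if_pos (by omega)]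
    have h1 : t.toNat = (t-1).toNat + 1 := by omega
    rw [h1, zwin_succ]
    have h2 : (1 : ℤ) + ((t-1).toNat : ℤ) = t := by omega
    rw [h2]
    push_cast
    split <;> ring
  rcases le_or_gt t 0 with h' | h'
  swap
  · omega
  rcases eq_or_lt_of_le h' with rfl | h''
  · rw [Sfun, Sfun, if_pos le_rfl, if_neg (by omega)]
    have e1 : ((0:ℤ) - 1 + 1) = 0 := by ring
    have e2 : (-(0 - 1 : ℤ)).toNat = 1 := by norm_num
    rw [e1, e2, zwin_one]
    have e3 : zwinCount ξ 1 (Int.toNat 0) = 0 := by simp [zwinCount]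
    rw [e3]
    split <;> norm_num
  · rw [Sfun, Sfun, if_neg (by omega), if_neg (by omega)]
    have h1 : (-(t-1)).toNat = 1 + (-t).toNat := by omega
    rw [h1, zwin_add, zwin_one]
    have h2 : (t - 1 + 1) = t := by ring
    rw [h2]
    have h4 : t + ((1:ℕ):ℤ) = t + 1 := by push_cast; ring
    rw [h4]
    push_cast
    split <;> ring

lemma toSeq_Sfun (ξ : ℤ → Bool) (t : ℤ) : toSeq (Sfun ξ) t = ξ t := by
  have h := Sfun_step ξ t
  unfold toSeq
  cases hb : ξ t
  · rw [hb, if_neg (by simp)] at h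
    rw [decide_eq_false_iff_not]
    omega
  · rw [hb, if_pos rfl] at h
    rw [decide_eq_true_eq]
    omega

lemma Sfun_sstep (ξ : ℤ → Bool) : SStep (Sfun ξ) := by
  intro t
  have h := Sfun_step ξ t
  split at h <;> [right; left] <;> omega

lemma Sfun_win (ξ : ℤ → Bool) (m : ℤ) (L : ℕ) :
    Sfun ξ (m + L) - Sfun ξ m = zwinCount ξ (m+1) L := by
  have h := toSeq_count (Sfun_sstep ξ) (m+1) L
  have e : ∀ s : ℤ, zwinCount (toSeq (Sfun ξ)) s L = zwinCount ξ s L := by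
    intro s
    unfold zwinCount
    congr 1
    apply Finset.filter_congr
    intro r _
    rw [toSeq_Sfun]
  rw [e] at h
  have h2 : m + 1 - 1 + (L:ℤ) = m + L := by ring
  have h3 : m + 1 - 1 = m := by ring
  rw [h2, h3] at h
  omega

lemma Sfun_valid {i j L : ℕ} {ξ : ℤ → Bool} (hξ : ξ ∈ Hset i j L) : SValid i j L (Sfun ξ) := by
  refine ⟨Sfun_sstep ξ, fun m => ?_⟩
  have h := Sfun_win ξ m L
  have h2 := hξ (m+1)
  omega

/-- the ramp `⌈ k t / L ⌉` -/
def Pfun (k L : ℕ) (t : ℤ) : ℤ := -((-(k * t)) / L)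

lemma Pfun_add (k L : ℕ) (hL : 1 ≤ L) (t : ℤ) : Pfun k L (t + L) = Pfun k L t + k := by
  unfold Pfun
  have h : -(↑k * (t + L)) = -(↑k * t) + (-(k:ℤ)) * L := by ring
  rw [h, Int.add_mul_ediv_right _ _ (by omega : (L:ℤ) ≠ 0)]
  ring

lemma Pfun_step (k L : ℕ) (hL : 1 ≤ L) (hkL : k ≤ L) (t : ℤ) :
    Pfun k L (t-1) ≤ Pfun k L t ∧ Pfun k L t ≤ Pfun k L (t-1) + 1 := by
  unfold Pfun
  have hm : (-(↑k * t) : ℤ) ≤ -(↑k * (t-1)) := by nlinarith [Int.natCast_nonneg k]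
  have h1 : (-(k*t) : ℤ) / L ≤ (-(k*(t-1)) : ℤ) / L :=
    Int.ediv_le_ediv (by omega) hm
  have h2 : (-(k*(t-1)) : ℤ) / L ≤ (-(k*t) : ℤ) / L + 1 := by
    have e : (-(↑k * (t-1)) : ℤ) = -(↑k * t) + k := by ring
    have e2 : ((-(k*t) : ℤ) + L) / L = (-(k*t) : ℤ) / L + 1 := by
      have := Int.add_mul_ediv_right (-(k*t) : ℤ) 1 (by omega : (L:ℤ) ≠ 0)
      simpa using this
    rw [e]
    calc ((-(↑k * t) : ℤ) + k) / L ≤ ((-(k*t) : ℤ) + L) / L :=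
          Int.ediv_le_ediv (by omega) (by omega)
      _ = _ := e2
  omega

lemma Pfun_sstep (k L : ℕ) (hL : 1 ≤ L) (hkL : k ≤ L) : SStep (Pfun k L) := by
  intro t
  have := Pfun_step k L hL hkL t
  omega

lemma Pfun_valid {i j k L : ℕ} (hL : 1 ≤ L) (hik : i ≤ k) (hkj : k ≤ j) (hjL : j ≤ L) :
    SValid i j L (Pfun k L) := by
  refine ⟨Pfun_sstep k L hL (by omega), fun m => ?_⟩
  rw [Pfun_add k L hL m]
  omega

lemma Pfun_addq (k L : ℕ) (hL : 1 ≤ L) (t : ℤ) (q : ℕ) :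
    Pfun k L (t + q * L) = Pfun k L t + q * k := by
  induction q with
  | zero => simp
  | succ q ih =>
      have e : t + ((q:ℤ)+1) * L = (t + q * L) + L := by ring
      push_cast
      rw [e, Pfun_add k L hL, ih]
      ring

/-- monotone and 1-Lipschitz -/
lemma SStep_lip {S : ℤ → ℤ} (hS : SStep S) (u : ℤ) (k : ℕ) :
    S u ≤ S (u + k) ∧ S (u + k) ≤ S u + k := by
  induction k with
  | zero => simp
  | succ k ih =>
      have h := hS (u + k + 1)
      have e : u + (k:ℤ) + 1 - 1 = u + k := by ring
      rw [e] at h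
      push_cast
      rw [show u + ((k:ℤ) + 1) = u + (k:ℤ) + 1 from by ring]
      omega

lemma SStep_lip' {S : ℤ → ℤ} (hS : SStep S) {u v : ℤ} (h : u ≤ v) :
    S u ≤ S v ∧ S v ≤ S u + (v - u) := by
  have := SStep_lip hS u (v - u).toNat
  have e : u + ((v-u).toNat : ℤ) = v := by omega
  rw [e] at this
  omega

lemma valid_max {i j L : ℕ} {F G : ℤ → ℤ} (hF : SValid i j L F) (hG : SValid i j L G) :
    SValid i j L (fun t => max (F t) (G t)) := by
  constructor
  · intro t
    have h1 := hF.1 t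
    have h2 := hG.1 t
    show max (F t) (G t) = max (F (t-1)) (G (t-1)) ∨
      max (F t) (G t) = max (F (t-1)) (G (t-1)) + 1
    omega
  · intro m
    have h1 := hF.2 m
    have h2 := hG.2 m
    show (i:ℤ) ≤ max (F (m+L)) (G (m+L)) - max (F m) (G m) ∧
      max (F (m+L)) (G (m+L)) - max (F m) (G m) ≤ j
    omega

lemma valid_min {i j L : ℕ} {F G : ℤ → ℤ} (hF : SValid i j L F) (hG : SValid i j L G) :
    SValid i j L (fun t => min (F t) (G t)) := by
  constructor
  · intro t
    have h1 := hF.1 t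
    have h2 := hG.1 t
    show min (F t) (G t) = min (F (t-1)) (G (t-1)) ∨
      min (F t) (G t) = min (F (t-1)) (G (t-1)) + 1
    omega
  · intro m
    have h1 := hF.2 m
    have h2 := hG.2 m
    show (i:ℤ) ≤ min (F (m+L)) (G (m+L)) - min (F m) (G m) ∧
      min (F (m+L)) (G (m+L)) - min (F m) (G m) ≤ j
    omega

/-- if every window of F grows no faster than G, then G - F is nondecreasing along steps of L -/
lemma diff_mono {L : ℕ} {F G : ℤ → ℤ}
    (h : ∀ m : ℤ, F (m + L) - F m ≤ G (m + L) - G m) (t : ℤ) (q : ℕ) :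
    G t - F t ≤ G (t + q * L) - F (t + q * L) := by
  induction q with
  | zero => simp
  | succ q ih =>
      have h2 := h (t + q * L)
      have e : t + ((q:ℤ)+1) * L = t + q * L + L := by ring
      push_cast
      rw [e]
      omega

lemma exists_hit (L : ℕ) (hL : 1 ≤ L) (t a : ℤ) (h : t ≤ a) :
    ∃ q : ℕ, t + q * L ≤ a ∧ a - L < t + q * L := by
  set s := (a - t).toNat with hs
  have h5 : s / L * L ≤ s := Nat.div_mul_le_self s L
  have h6 : s < s / L * L + L := by
    have h1 := Nat.div_add_mod s L
    have h2 := Nat.mod_lt s (show 0 < L by omega)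
    rw [mul_comm] at h1
    omega
  refine ⟨s / L, ?_, ?_⟩ <;>
  · rw [show ((s / L : ℕ) : ℤ) * (L : ℤ) = ((s / L * L : ℕ) : ℤ) by push_cast; ring]
    omega

lemma shift_iter (ζ : ℤ → Bool) (n : ℕ) (t : ℤ) : (shift^[n] ζ) t = ζ (t + n) := by
  induction n generalizing ζ t with
  | zero => simp
  | succ n ih =>
      rw [Function.iterate_succ_apply, ih]
      show ζ (t + n + 1) = _
      congr 1
      push_cast
      ring

lemma open_window {U : Set (ℤ → Bool)} (hU : IsOpen U) {ξ : ℤ → Bool} (hξ : ξ ∈ U) :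
    ∃ K : ℕ, ∀ ζ : ℤ → Bool, (∀ t : ℤ, t.natAbs ≤ K → ζ t = ξ t) → ζ ∈ U := by
  rw [isOpen_pi_iff] at hU
  obtain ⟨I, u, h1, h2⟩ := hU ξ hξ
  refine ⟨I.sup Int.natAbs, fun ζ hζ => h2 ?_⟩
  intro a ha
  rw [hζ a (Finset.le_sup ha)]
  exact (h1 a ha).2

-- new infra pieces
lemma valid_translate {i j L : ℕ} {S : ℤ → ℤ} (h : SValid i j L S) (c : ℤ) :
    SValid i j L (fun t => S (t - c)) := by
  constructor
  · intro t
    have h1 := h.1 (t - c)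
    show S (t - c) = S (t - 1 - c) ∨ S (t - c) = S (t - 1 - c) + 1
    rw [show t - 1 - c = t - c - 1 by ring]
    exact h1
  · intro m
    have h1 := h.2 (m - c)
    show (i:ℤ) ≤ S (m + L - c) - S (m - c) ∧ S (m + L - c) - S (m - c) ≤ j
    rw [show m + (L:ℤ) - c = m - c + L by ring]
    exact h1

lemma valid_addC {i j L : ℕ} {S : ℤ → ℤ} (h : SValid i j L S) (C : ℤ) :
    SValid i j L (fun t => S t + C) := by
  constructor
  · intro t
    have h1 := h.1 t
    show S t + C = S (t-1) + C ∨ S t + C = S (t-1) + C + 1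
    omega
  · intro m
    have h1 := h.2 m
    show (i:ℤ) ≤ S (m + L) + C - (S m + C) ∧ S (m + L) + C - (S m + C) ≤ j
    omega

lemma exists_hit' (L : ℕ) (hL : 1 ≤ L) (t a : ℤ) (h : a ≤ t) :
    ∃ q : ℕ, a ≤ t - q * L ∧ t - q * L < a + L := by
  set s := (t - a).toNat with hs
  have h5 : s / L * L ≤ s := Nat.div_mul_le_self s L
  have h6 : s < s / L * L + L := by
    have h1 := Nat.div_add_mod s L
    have h2 := Nat.mod_lt s (show 0 < L by omega)
    rw [mul_comm] at h1
    omega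
  refine ⟨s / L, ?_, ?_⟩ <;>
  · rw [show ((s / L : ℕ) : ℤ) * (L : ℤ) = ((s / L * L : ℕ) : ℤ) by push_cast; ring]
    omega

/-- The key gluing lemma. -/
lemma glue (i j L : ℕ) (hL : 1 ≤ L) (hij : i < j) (hjL : j ≤ L)
    (ξ η : ℤ → Bool) (hξ : ξ ∈ Hset i j L) (hη : η ∈ Hset i j L)
    (K : ℕ) (n : ℕ) (hn : 2*K + 8*L*L + 8*L + 8 ≤ n) :
    ∃ ζ ∈ Hset i j L, (∀ t : ℤ, t ≤ (K:ℤ) → ζ t = η t) ∧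
      (∀ t : ℤ, (n:ℤ) - K ≤ t → ζ t = ξ (t - n)) := by
  have hiL : i ≤ L := by omega
  have hij' : i ≤ j := by omega
  have hnL : (2*(K:ℤ) + 8*(L:ℤ)*(L:ℤ) + 8*(L:ℤ) + 8 : ℤ) ≤ (n:ℤ) := by exact_mod_cast hn
  have hLL : (0:ℤ) ≤ (L:ℤ)*(L:ℤ) := by positivity
  set A : ℤ → ℤ := Sfun η with hA
  set B0 : ℤ → ℤ := fun t => Sfun ξ (t - n) with hB0
  set Pi : ℤ → ℤ := Pfun i L with hPi
  set Pj : ℤ → ℤ := Pfun j L with hPj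
  set b' : ℤ := (n:ℤ) - K - 1 with hb'
  set C1 : ℤ := A K - Pi K + L with hC1
  set C2 : ℤ := A K - Pj K - L with hC2
  set C3 : ℤ := C1 + Pi b' + L - B0 b' with hC3
  have hAv : SValid i j L A := Sfun_valid hη
  have hB0v : SValid i j L B0 := by rw [hB0]; exact valid_translate (Sfun_valid hξ) n
  have hB0s : SStep B0 := hB0v.1
  have hPis : SStep Pi := Pfun_sstep i L hL hiL
  have hPjs : SStep Pj := Pfun_sstep j L hL hjL
  have hPiv : SValid i j L Pi := Pfun_valid hL le_rfl hij' hjL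
  have hPjv : SValid i j L Pj := Pfun_valid hL hij' le_rfl hjL
  have hB0win : ∀ m : ℤ, (i:ℤ) ≤ B0 (m + L) - B0 m ∧ B0 (m + L) - B0 m ≤ j := hB0v.2
  -- the four pointwise bounds
  have hA1 : ∀ t : ℤ, t ≤ (K:ℤ) → A t ≤ Pi t + C1 := by
    intro t ht
    obtain ⟨q, hq1, hq2⟩ := exists_hit L hL t K ht
    have hd : A t - Pi t ≤ A (t + q*L) - Pi (t + q*L) := by
      refine diff_mono (fun m => ?_) t q
      rw [hPi, Pfun_add i L hL]
      have := hAv.2 m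
      omega
    have h1 : A (t + q*L) ≤ A K := (SStep_lip' hAv.1 hq1).1
    have h2 : Pi K ≤ Pi (t + q*L) + ((K:ℤ) - (t + q*L)) := (SStep_lip' hPis hq1).2
    omega
  have hA2 : ∀ t : ℤ, t ≤ (K:ℤ) → Pj t + C2 ≤ A t := by
    intro t ht
    obtain ⟨q, hq1, hq2⟩ := exists_hit L hL t K ht
    have hd : Pj t - A t ≤ Pj (t + q*L) - A (t + q*L) := by
      refine diff_mono (fun m => ?_) t q
      rw [hPj, Pfun_add j L hL]
      have := hAv.2 m
      omega
    have h1 : Pj (t + q*L) ≤ Pj K := (SStep_lip' hPjs hq1).1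
    have h2 : A K ≤ A (t + q*L) + ((K:ℤ) - (t + q*L)) := (SStep_lip' hAv.1 hq1).2
    omega
  have hB2 : ∀ t : ℤ, b' ≤ t → Pi t + C1 ≤ B0 t + C3 := by
    intro t ht
    obtain ⟨q, hq1, hq2⟩ := exists_hit' L hL t b' ht
    have hd : B0 (t - q*L) - Pi (t - q*L) ≤ B0 t - Pi t := by
      have hmm := diff_mono (L := L) (F := Pi) (G := B0) (fun m => ?_) (t - q*L) q
      · rw [show t - (q:ℤ)*L + q*L = t by ring] at hmm
        exact hmm
      · rw [hPi, Pfun_add i L hL]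
        have := hB0win m
        omega
    have h1 : B0 b' ≤ B0 (t - q*L) := (SStep_lip' hB0s hq1).1
    have h2 : Pi (t - q*L) ≤ Pi b' + ((t - q*L) - b') := (SStep_lip' hPis hq1).2
    omega
  have hB1 : ∀ t : ℤ, b' ≤ t → B0 t + C3 ≤ Pj t + C2 := by
    intro t ht
    obtain ⟨q, hq1, hq2⟩ := exists_hit' L hL t b' ht
    have hd : Pj (t - q*L) - B0 (t - q*L) ≤ Pj t - B0 t := by
      have hmm := diff_mono (L := L) (F := B0) (G := Pj) (fun m => ?_) (t - q*L) q
      · rw [show t - (q:ℤ)*L + q*L = t by ring] at hmm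
        exact hmm
      · rw [hPj, Pfun_add j L hL]
        have := hB0win m
        omega
    have h1 : Pj b' ≤ Pj (t - q*L) := (SStep_lip' hPjs hq1).1
    have h2 : B0 (t - q*L) ≤ B0 b' + ((t - q*L) - b') := (SStep_lip' hB0s hq1).2
    -- key inequality
    have hKb : (K:ℤ) ≤ b' := by omega
    obtain ⟨p, hp1, hp2⟩ := exists_hit L hL (K:ℤ) b' hKb
    have hPj2 : Pj ((K:ℤ) + p*L) = Pj K + p*j := by rw [hPj]; exact Pfun_addq j L hL _ p
    have hPi2 : Pi ((K:ℤ) + p*L) = Pi K + p*i := by rw [hPi]; exact Pfun_addq i L hL _ p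
    have h3 : Pj ((K:ℤ) + p*L) ≤ Pj b' := (SStep_lip' hPjs hp1).1
    have h4 : Pi b' ≤ Pi ((K:ℤ) + p*L) + (b' - ((K:ℤ) + p*L)) := (SStep_lip' hPis hp1).2
    have hp8 : (8*(L:ℤ)) + 1 ≤ p := by
      by_contra hcon
      push_neg at hcon
      have hp0 : (p:ℤ) ≤ 8*L := by omega
      have hpl : (p:ℤ)*L ≤ 8*(L:ℤ)*L := mul_le_mul_of_nonneg_right hp0 (by positivity)
      linarith
    have h5 : (p:ℤ) ≤ (p:ℤ)*((j:ℤ) - i) := by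
      have := mul_le_mul_of_nonneg_left (show (1:ℤ) ≤ (j:ℤ) - i by omega)
        (show (0:ℤ) ≤ (p:ℤ) by positivity)
      linarith
    have key : Pj b' - Pi b' - Pj K + Pi K ≥ 4*(L:ℤ) - 1 := by
      have h6 : (p:ℤ)*(j:ℤ) - (p:ℤ)*(i:ℤ) = (p:ℤ)*((j:ℤ) - i) := by ring
      linarith
    linarith
  -- assemble
  set S : ℤ → ℤ := fun t => max (min (A t) (Pi t + C1)) (min (B0 t + C3) (Pj t + C2)) with hS
  have hSv : SValid i j L S :=
    valid_max (valid_min hAv (valid_addC hPiv C1)) (valid_min (valid_addC hB0v C3) (valid_addC hPjv C2))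
  have hSA : ∀ t : ℤ, t ≤ (K:ℤ) → S t = A t := by
    intro t ht
    have e1 : min (A t) (Pi t + C1) = A t := min_eq_left (hA1 t ht)
    have e2 : min (B0 t + C3) (Pj t + C2) ≤ A t := le_trans (min_le_right _ _) (hA2 t ht)
    show max (min (A t) (Pi t + C1)) (min (B0 t + C3) (Pj t + C2)) = A t
    rw [e1, max_eq_left e2]
  have hSB : ∀ t : ℤ, b' ≤ t → S t = B0 t + C3 := by
    intro t ht
    have e1 : min (B0 t + C3) (Pj t + C2) = B0 t + C3 := min_eq_left (hB1 t ht)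
    have e2 : min (A t) (Pi t + C1) ≤ B0 t + C3 := le_trans (min_le_right _ _) (hB2 t ht)
    show max (min (A t) (Pi t + C1)) (min (B0 t + C3) (Pj t + C2)) = B0 t + C3
    rw [e1, max_eq_right e2]
  refine ⟨toSeq S, toSeq_mem hSv, ?_, ?_⟩
  · intro t ht
    have h1 : S t = A t := hSA t ht
    have h2 : S (t-1) = A (t-1) := hSA (t-1) (by omega)
    have : toSeq S t = toSeq A t := by
      unfold toSeq
      rw [h1, h2]
    rw [this, hA]
    exact toSeq_Sfun η t
  · intro t ht
    have h1 : S t = B0 t + C3 := hSB t (by omega)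
    have h2 : S (t-1) = B0 (t-1) + C3 := hSB (t-1) (by omega)
    have e2 : toSeq (Sfun ξ) (t - n) = ξ (t - n) := toSeq_Sfun ξ (t - n)
    rw [← e2]
    unfold toSeq
    rw [h1, h2]
    simp only [hB0]
    rw [show t - (n:ℤ) - 1 = t - 1 - n by ring, decide_eq_decide]
    omega

/-- for `0 ≤ i < j ≤ L`, the subshift `H(i,j,L)` is nonempty, and the left
shift restricted to it is topologically mixing: for every pair of nonempty relatively
open subsets `U ∩ H`, `V ∩ H` of `H(i,j,L)` there is `N` such that
`σ^{-n}(U) ∩ V ∩ H ≠ ∅` for all `n ≥ N`. -/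
theorem Hset_nonempty_and_topologically_mixing
    (i j L : ℕ) (hL : 1 ≤ L) (hij : i < j) (hjL : j ≤ L) :
    (Hset i j L).Nonempty ∧
    ∀ U V : Set (ℤ → Bool), IsOpen U → IsOpen V →
      (U ∩ Hset i j L).Nonempty → (V ∩ Hset i j L).Nonempty →
      ∃ N : ℕ, ∀ n ≥ N, (shift^[n] ⁻¹' U ∩ V ∩ Hset i j L).Nonempty := by
  constructor
  · exact ⟨toSeq (Pfun j L), toSeq_mem (Pfun_valid hL (le_of_lt hij) le_rfl hjL)⟩
  · rintro U V hU hV ⟨ξ, hξU, hξH⟩ ⟨η, hηV, hηH⟩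
    obtain ⟨K1, hK1⟩ := open_window hU hξU
    obtain ⟨K2, hK2⟩ := open_window hV hηV
    refine ⟨2*(max K1 K2) + 8*L*L + 8*L + 8, fun n hn => ?_⟩
    obtain ⟨ζ, hζH, hleft, hright⟩ := glue i j L hL hij hjL ξ η hξH hηH (max K1 K2) n hn
    refine ⟨ζ, ⟨?_, ?_⟩, hζH⟩
    · show shift^[n] ζ ∈ U
      apply hK1
      intro t ht
      rw [shift_iter]
      have h1 : (n:ℤ) - (max K1 K2 : ℕ) ≤ t + n := by omega
      rw [hright (t+n) h1]
      congr 1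
      ring
    · apply hK2
      intro t ht
      exact hleft t (by omega)
end

section
/- Fix an integer c ≥ 1. There exist constants K₁, K₂ > 0 such that for every integer L ≥ c + 2 the following holds with j = L − c and i = j − 1: the limit h = lim_{n→∞} (1/n) log N(n) exists, where N(n) denotes the number of (i,j,L)-admissible words in {0,2}^n for n ≥ L, and K₁ (log L)/L ≤ h ≤ K₂ (log L)/L. -/
/-- The number of `(i,j,L)`-admissible words in `{0,2}^n`. -/
noncomputable def numAdmissible (i j L n : ℕ) : ℕ :=
  Nat.card {w : Fin n → Bool // Admissible i j L (List.ofFn w)}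


def Cblk (L c e : ℕ) : List Bool :=
  List.replicate e true ++ List.replicate 1 false ++ List.replicate (L - c - e) true ++
  List.replicate c false ++ List.replicate (L - c) true ++ List.replicate c false

lemma length_Cblk {L c e : ℕ} (hL : c + 2 ≤ L) (he : e + 1 ≤ L - c) :
    (Cblk L c e).length = 2*L+1 := by
  simp [Cblk]; omega

lemma count_take_cons_false (l : List Bool) (t : ℕ) :
    ((false :: l).take t).count false = min t 1 + (l.take (t-1)).count false := by
  cases t <;> simp [List.count_cons] <;> omega

lemma count_take_Cblk {L c e : ℕ} (hc : 1 ≤ c) (hL : c + 2 ≤ L) (he : e + 1 ≤ L - c) (t : ℕ) :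
    ((Cblk L c e).take t).count false =
      min (t - e) 1 + min (t - (L - c + 1)) c + min (t - (2*L - c + 1)) c := by
  simp [Cblk, List.take_append, List.take_replicate, List.count_append,
    List.count_replicate, count_take_cons_false]
  omega

lemma win_split (l : List Bool) (m L : ℕ) :
    (l.take (m+L)).count false = (l.take m).count false + ((l.drop m).take L).count false := by
  rw [List.take_add, List.count_append]

lemma winA {L c e : ℕ} (hc : 1 ≤ c) (hL : c + 2 ≤ L) (he : e + 1 ≤ L - c) {m : ℕ}
    (hm : m + L ≤ 2*L+1) :
    c ≤ (((Cblk L c e).drop m).take L).count false ∧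
      (((Cblk L c e).drop m).take L).count false ≤ c + 1 := by
  have h3 := win_split (Cblk L c e) m L
  rw [count_take_Cblk hc hL he (m+L), count_take_Cblk hc hL he m] at h3
  omega

lemma count_take_Cblk2 {L c e e' : ℕ} (hc : 1 ≤ c) (hL : c + 2 ≤ L) (he : e + 1 ≤ L - c)
    (he' : e' + 1 ≤ L - c) (t : ℕ) :
    ((Cblk L c e ++ Cblk L c e').take t).count false =
      (min (t - e) 1 + min (t - (L - c + 1)) c + min (t - (2*L - c + 1)) c) +
      (min (t - (2*L+1) - e') 1 + min (t - (2*L+1) - (L - c + 1)) c +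
        min (t - (2*L+1) - (2*L - c + 1)) c) := by
  rw [List.take_append, List.count_append, length_Cblk hL he,
    count_take_Cblk hc hL he, count_take_Cblk hc hL he']

set_option maxHeartbeats 3000000 in
lemma winB {L c e e' : ℕ} (hc : 1 ≤ c) (hL : c + 2 ≤ L) (he : e + 1 ≤ L - c)
    (he' : e' + 1 ≤ L - c) {m : ℕ} (hm : m ≤ 2*L) :
    c ≤ (((Cblk L c e ++ Cblk L c e').drop m).take L).count false ∧
      (((Cblk L c e ++ Cblk L c e').drop m).take L).count false ≤ c + 1 := by
  have h3 := win_split (Cblk L c e ++ Cblk L c e') m L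
  rw [count_take_Cblk2 hc hL he he' (m+L), count_take_Cblk2 hc hL he he' m] at h3
  omega


def Wrd (L c : ℕ) (es : List ℕ) : List Bool := (es.map (Cblk L c)).flatten

lemma Wrd_cons (L c e es) : Wrd L c (e :: es) = Cblk L c e ++ Wrd L c es := by
  simp [Wrd]

lemma length_Wrd {L c : ℕ} (hL : c + 2 ≤ L) {es : List ℕ} (hes : ∀ e ∈ es, e + 1 ≤ L - c) :
    (Wrd L c es).length = es.length * (2*L+1) := by
  induction es with
  | nil => simp [Wrd]
  | cons e tl ih =>
    rw [Wrd_cons, List.length_append, length_Cblk hL (hes e (by simp)),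
      ih (fun x hx => hes x (by simp [hx])), List.length_cons]
    ring

lemma count_bool (l : List Bool) : l.count true + l.count false = l.length := by
  induction l with
  | nil => simp
  | cons b tl ih => cases b <;> simp [List.count_cons] <;> omega

lemma win_prefix {P Q : List Bool} {m L : ℕ} (h : m + L ≤ P.length) :
    ((P ++ Q).drop m).take L = (P.drop m).take L := by
  have h1 : m - P.length = 0 := by omega
  rw [List.drop_append, h1, List.drop_zero,
    List.take_append_of_le_length (by rw [List.length_drop]; omega)]

/-- windows of the block word have false-count in [c, c+1] -/
lemma win_Wrd {L c : ℕ} (hc : 1 ≤ c) (hL : c + 2 ≤ L) {es : List ℕ}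
    (hes : ∀ e ∈ es, e + 1 ≤ L - c) {m : ℕ} (hm : m + L ≤ (Wrd L c es).length) :
    c ≤ (((Wrd L c es).drop m).take L).count false ∧
      (((Wrd L c es).drop m).take L).count false ≤ c + 1 := by
  induction es generalizing m with
  | nil => simp [Wrd] at hm; omega
  | cons e tl ih =>
    have he : e + 1 ≤ L - c := hes e (by simp)
    have htl : ∀ x ∈ tl, x + 1 ≤ L - c := fun x hx => hes x (by simp [hx])
    rw [Wrd_cons]
    by_cases h1 : 2*L+1 ≤ m
    · -- window in the tail
      have hdrop : (Cblk L c e ++ Wrd L c tl).drop m = (Wrd L c tl).drop (m - (2*L+1)) := by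
        rw [List.drop_append, length_Cblk hL he,
          List.drop_eq_nil_of_le (by rw [length_Cblk hL he]; omega), List.nil_append]
      rw [hdrop]
      apply ih htl
      rw [Wrd_cons, List.length_append, length_Cblk hL he] at hm
      omega
    · push_neg at h1
      cases tl with
      | nil =>
        have hm' : m + L ≤ 2*L+1 := by
          rw [Wrd_cons, List.length_append, length_Cblk hL he] at hm
          simp [Wrd] at hm; omega
        rw [win_prefix (by rw [length_Cblk hL he]; omega)]
        exact winA hc hL he hm'
      | cons e' tl' =>
        have he' : e' + 1 ≤ L - c := htl e' (by simp)
        rw [Wrd_cons, ← List.append_assoc,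
          win_prefix (by rw [List.length_append, length_Cblk hL he, length_Cblk hL he']; omega)]
        exact winB hc hL he he' (by omega)


-- converting false-count bounds to Admissible
lemma admissible_of_false {L c : ℕ} (hc : 1 ≤ c) (hL : c + 2 ≤ L) {w : List Bool}
    (h : ∀ m, m + L ≤ w.length → c ≤ ((w.drop m).take L).count false ∧
      ((w.drop m).take L).count false ≤ c + 1) :
    Admissible (L - c - 1) (L - c) L w := by
  intro m hm
  have hlen : ((w.drop m).take L).length = L := by
    rw [List.length_take, List.length_drop]; omega
  have hcb := count_bool ((w.drop m).take L)
  have := h m hm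
  unfold winCount
  omega

lemma admissible_take {i j L n : ℕ} {w : List Bool} (h : Admissible i j L w) :
    Admissible i j L (w.take n) := by
  intro m hm
  rw [List.length_take] at hm
  have hwin : ((w.take n).drop m).take L = ((w.drop m)).take L := by
    rw [List.drop_take]
    rw [List.take_take]
    congr 1
    omega
  unfold winCount
  rw [hwin]
  exact h m (by omega)

lemma admissible_drop {i j L n : ℕ} (hL : 1 ≤ L) {w : List Bool} (h : Admissible i j L w) :
    Admissible i j L (w.drop n) := by
  intro m hm
  rw [List.length_drop] at hm
  have hwin : ((w.drop n).drop m) = w.drop (n + m) := by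
    rw [List.drop_drop]
  unfold winCount
  rw [hwin]
  exact h (n+m) (by omega)


lemma adm_Wrd {L c : ℕ} (hc : 1 ≤ c) (hL : c + 2 ≤ L) {es : List ℕ}
    (hes : ∀ e ∈ es, e + 1 ≤ L - c) :
    Admissible (L - c - 1) (L - c) L (Wrd L c es) :=
  admissible_of_false hc hL (fun m hm => win_Wrd hc hL hes hm)



lemma Cblk_inj {L c e e' : ℕ} (hc : 1 ≤ c) (hL : c + 2 ≤ L) (he : e + 1 ≤ L - c)
    (he' : e' + 1 ≤ L - c) (h : Cblk L c e = Cblk L c e') : e = e' := by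
  have h1 := congrArg (fun l => (l.take (e+1)).count false) h
  have h2 := congrArg (fun l => (l.take (e'+1)).count false) h
  simp only [count_take_Cblk hc hL he, count_take_Cblk hc hL he'] at h1 h2
  omega

lemma Wrd_inj {L c : ℕ} (hc : 1 ≤ c) (hL : c + 2 ≤ L) :
    ∀ (es es' : List ℕ), (∀ e ∈ es, e + 1 ≤ L - c) → (∀ e ∈ es', e + 1 ≤ L - c) →
    es.length = es'.length → Wrd L c es = Wrd L c es' → es = es' := by
  intro es
  induction es with
  | nil => intro es' _ _ hlen _; cases es' with
    | nil => rfl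
    | cons x xs => simp at hlen
  | cons e tl ih =>
    intro es' hb hb' hlen hw
    cases es' with
    | nil => simp at hlen
    | cons e' tl' =>
      have he : e + 1 ≤ L - c := hb e (by simp)
      have he' : e' + 1 ≤ L - c := hb' e' (by simp)
      rw [Wrd_cons, Wrd_cons] at hw
      have hhead : Cblk L c e = Cblk L c e' := by
        have t1 := congrArg (List.take (2*L+1)) hw
        rwa [List.take_left' (length_Cblk hL he), List.take_left' (length_Cblk hL he')] at t1
      have htail : Wrd L c tl = Wrd L c tl' := by
        have t2 := congrArg (List.drop (2*L+1)) hw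
        rwa [List.drop_left' (length_Cblk hL he), List.drop_left' (length_Cblk hL he')] at t2
      have := Cblk_inj hc hL he he' hhead
      subst this
      rw [ih tl' (fun x hx => hb x (by simp [hx])) (fun x hx => hb' x (by simp [hx]))
        (by simpa using hlen) htail]


section lower
variable {L c : ℕ}

lemma esbound (q : ℕ) (hL : c + 2 ≤ L) (a : Fin q → Fin (L - c)) :
    ∀ e ∈ (List.ofFn a).map Fin.val, e + 1 ≤ L - c := by
  intro e he
  simp only [List.mem_map, List.mem_ofFn] at he
  obtain ⟨x, ⟨i, rfl⟩, rfl⟩ := he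
  exact (a i).isLt

lemma numAdmissible_lower (hc : 1 ≤ c) (hL : c + 2 ≤ L) (q : ℕ) :
    (L - c)^q ≤ numAdmissible (L - c - 1) (L - c) L (q * (2*L+1)) := by
  set n := q * (2*L+1) with hn
  have key : ∀ (a : Fin q → Fin (L - c)), (Wrd L c ((List.ofFn a).map Fin.val)).length = n := by
    intro a
    rw [length_Wrd hL (esbound q hL a)]
    simp [hn]
  let F : (Fin q → Fin (L - c)) → {w : Fin n → Bool // Admissible (L - c - 1) (L - c) L (List.ofFn w)} :=
    fun a => ⟨fun i => (Wrd L c ((List.ofFn a).map Fin.val))[(i : ℕ)]'(by rw [key a]; exact i.isLt),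
      by
        have hofn : (List.ofFn fun i : Fin n =>
            (Wrd L c ((List.ofFn a).map Fin.val))[(i : ℕ)]'(by rw [key a]; exact i.isLt))
            = Wrd L c ((List.ofFn a).map Fin.val) := by
          apply List.ext_getElem
          · rw [List.length_ofFn, key a]
          · intro i h1 h2
            simp
        rw [hofn]
        exact adm_Wrd hc hL (esbound q hL a)⟩
  have hF : Function.Injective F := by
    intro a b hab
    have h1 : (fun i : Fin n => (Wrd L c ((List.ofFn a).map Fin.val))[(i : ℕ)]'(by rw [key a]; exact i.isLt))
        = (fun i : Fin n => (Wrd L c ((List.ofFn b).map Fin.val))[(i : ℕ)]'(by rw [key b]; exact i.isLt)) :=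
      congrArg Subtype.val hab
    have h2 : Wrd L c ((List.ofFn a).map Fin.val) = Wrd L c ((List.ofFn b).map Fin.val) := by
      apply List.ext_getElem
      · rw [key a, key b]
      · intro i hia hib
        have := congrFun h1 ⟨i, by rw [← key a]; exact hia⟩
        simpa using this
    have h3 := Wrd_inj hc hL _ _ (esbound q hL a) (esbound q hL b) (by simp) h2
    have h4 : List.ofFn a = List.ofFn b := by
      apply List.map_injective_iff.2 Fin.val_injective h3
    exact List.ofFn_injective h4
  calc (L - c)^q = Nat.card (Fin q → Fin (L - c)) := by
        simp [Nat.card_eq_fintype_card]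
    _ ≤ _ := Nat.card_le_card_of_injective F hF

lemma numAdmissible_pos (hc : 1 ≤ c) (hL : c + 2 ≤ L) (n : ℕ) :
    1 ≤ numAdmissible (L - c - 1) (L - c) L n := by
  have hb : ∀ e ∈ List.replicate n 0, e + 1 ≤ L - c := by
    intro e he
    rw [List.eq_of_mem_replicate he]
    omega
  have hlen : (Wrd L c (List.replicate n 0)).length = n * (2*L+1) := by
    rw [length_Wrd hL hb, List.length_replicate]
  have hwn : n ≤ (Wrd L c (List.replicate n 0)).length := by rw [hlen]; nlinarith
  have hadm := admissible_take (n := n) (adm_Wrd hc hL hb)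
  refine Nat.one_le_iff_ne_zero.2 (Nat.card_ne_zero.2 ⟨⟨⟨fun i =>
    (Wrd L c (List.replicate n 0))[(i : ℕ)]'(lt_of_lt_of_le i.isLt hwn), ?_⟩⟩, ?_⟩)
  · have : (List.ofFn fun i : Fin n =>
        (Wrd L c (List.replicate n 0))[(i : ℕ)]'(lt_of_lt_of_le i.isLt hwn))
        = (Wrd L c (List.replicate n 0)).take n := by
      apply List.ext_getElem
      · rw [List.length_ofFn, List.length_take]; omega
      · intro i h1 h2
        simp [List.getElem_take]
    rw [this]
    exact hadm
  · infer_instance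
end lower

lemma numAdmissible_submul {i j L : ℕ} (hL : 1 ≤ L) (a b : ℕ) :
    numAdmissible i j L (a + b) ≤ numAdmissible i j L a * numAdmissible i j L b := by
  unfold numAdmissible
  rw [← Nat.card_prod]
  set T := fun (n : ℕ) => {w : Fin n → Bool // Admissible i j L (List.ofFn w)} with hT
  have main : ∀ w : T (a+b),
      List.ofFn w.1 = List.ofFn (fun i : Fin a => w.1 (Fin.castAdd b i)) ++
        List.ofFn (fun i : Fin b => w.1 (Fin.natAdd a i)) := fun w => by rw [List.ofFn_add]; rfl
  let G : T (a+b) → T a × T b := fun w =>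
    (⟨fun i => w.1 (Fin.castAdd b i), by
        have h1 : List.ofFn (fun i : Fin a => w.1 (Fin.castAdd b i))
            = (List.ofFn w.1).take a := by
          rw [main w, List.take_left' (by simp)]
        rw [h1]; exact admissible_take w.2⟩,
     ⟨fun i => w.1 (Fin.natAdd a i), by
        have h1 : List.ofFn (fun i : Fin b => w.1 (Fin.natAdd a i))
            = (List.ofFn w.1).drop a := by
          rw [main w, List.drop_left' (by simp)]
        rw [h1]; exact admissible_drop hL w.2⟩)
  have hG : Function.Injective G := by
    intro w w' h
    obtain ⟨h1, h2⟩ := Prod.mk.injEq .. ▸ h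
    have h1' := congrArg Subtype.val h1
    have h2' := congrArg Subtype.val h2
    apply Subtype.ext
    funext i
    refine Fin.addCases (fun k => ?_) (fun k => ?_) i
    · exact congrFun h1' k
    · exact congrFun h2' k
  exact Nat.card_le_card_of_injective G hG

section upper
variable {L c : ℕ}

def fsb (L : ℕ) (w : Fin L → Bool) : List ℕ :=
  ((List.finRange L).filter (fun i => w i == false)).map Fin.val

lemma fsb_length (hc : 1 ≤ c) (hL : c + 2 ≤ L) {w : Fin L → Bool}
    (hw : Admissible (L - c - 1) (L - c) L (List.ofFn w)) : (fsb L w).length ≤ c + 1 := by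
  have h0 := hw 0 (by simp)
  have hwin : winCount (List.ofFn w) 0 L = (List.ofFn w).count true := by
    unfold winCount
    rw [List.drop_zero, List.take_of_length_le (by simp)]
  have hcb := count_bool (List.ofFn w)
  have hlen : (List.ofFn w).length = L := by simp
  have hcount : (List.ofFn w).count false = (fsb L w).length := by
    rw [List.ofFn_eq_map, List.count_eq_countP, List.countP_map]
    unfold fsb
    rw [List.length_map, ← List.countP_eq_length_filter]
    rfl
  omega

lemma fsb_mem {w : Fin L → Bool} {x : ℕ} : x ∈ fsb L w ↔ ∃ i : Fin L, (i : ℕ) = x ∧ w i = false := by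
  unfold fsb
  simp only [List.mem_map, List.mem_filter, List.mem_finRange, true_and, beq_iff_eq]
  exact ⟨fun ⟨a,h1,h2⟩ => ⟨a,h2,h1⟩, fun ⟨a,h1,h2⟩ => ⟨a,h2,h1⟩⟩

noncomputable def enc (L c : ℕ) (w : Fin L → Bool) : Fin (c+1) → Fin (L+1) :=
  fun k => ⟨(fsb L w).getD k L, by
    rcases lt_or_ge (k : ℕ) (fsb L w).length with h | h
    · rw [List.getD_eq_getElem _ _ h]
      have : (fsb L w)[(k:ℕ)] ∈ fsb L w := List.getElem_mem ..
      rw [fsb_mem] at this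
      obtain ⟨i, hi, _⟩ := this
      omega
    · rw [List.getD_eq_default _ _ h]
      omega⟩

lemma enc_inj (hc : 1 ≤ c) (hL : c + 2 ≤ L) :
    Function.Injective (fun w : {w : Fin L → Bool // Admissible (L - c - 1) (L - c) L (List.ofFn w)} =>
      enc L c w.1) := by
  intro w w' h
  have key : ∀ (v : {w : Fin L → Bool // Admissible (L - c - 1) (L - c) L (List.ofFn w)}) (i : Fin L),
      v.1 i = false ↔ ∃ k : Fin (c+1), (enc L c v.1 k : ℕ) = (i : ℕ) := by
    intro v i
    constructor
    · intro hv
      have hx : (i : ℕ) ∈ fsb L v.1 := fsb_mem.2 ⟨i, rfl, hv⟩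
      obtain ⟨k, hk, hk2⟩ := List.getElem_of_mem hx
      have hkc : k < c + 1 := lt_of_lt_of_le hk (fsb_length hc hL v.2)
      refine ⟨⟨k, hkc⟩, ?_⟩
      show (fsb L v.1).getD k L = (i : ℕ)
      rw [List.getD_eq_getElem _ _ hk]; exact hk2
    · rintro ⟨k, hk⟩
      rcases lt_or_ge (k : ℕ) (fsb L v.1).length with hlt | hge
      · have hmem : (i : ℕ) ∈ fsb L v.1 := by
          rw [← hk]
          show (fsb L v.1).getD (k : ℕ) L ∈ fsb L v.1
          rw [List.getD_eq_getElem _ _ hlt]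
          exact List.getElem_mem ..
        obtain ⟨i', hi', hv⟩ := fsb_mem.1 hmem
        rwa [show i = i' from Fin.ext hi'.symm]
      · exfalso
        have : (enc L c v.1 k : ℕ) = L := by
          show (fsb L v.1).getD (k : ℕ) L = L
          rw [List.getD_eq_default _ _ hge]
        omega
  apply Subtype.ext
  funext i
  have h1 := key w i
  have h2 := key w' i
  simp only [h] at h1
  rw [← h2] at h1
  cases hwi : w.1 i <;> cases hwi' : w'.1 i <;> simp_all
end upper

lemma numAdmissible_upper (hc : 1 ≤ c) (hL : c + 2 ≤ L) :
    numAdmissible (L - c - 1) (L - c) L L ≤ (L+1)^(c+1) := by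
  have := Nat.card_le_card_of_injective _ (enc_inj hc hL)
  calc numAdmissible (L - c - 1) (L - c) L L ≤ Nat.card (Fin (c+1) → Fin (L+1)) := this
    _ = (L+1)^(c+1) := by simp [Nat.card_eq_fintype_card]

open Filter Real

/-- Proposition on entropy estimates: fix `c ≥ 1`.  There are constants
`K₁, K₂ > 0` such that for every `L ≥ c + 2`, with `j = L − c` and `i = j − 1`, the
entropy `h = lim (1/n) log N(n)` of the `(i,j,L)`-admissible words exists and satisfies
`K₁ (log L)/L ≤ h ≤ K₂ (log L)/L`. -/
theorem entropy_estimate (c : ℕ) (hc : 1 ≤ c) :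
    ∃ K₁ : ℝ, 0 < K₁ ∧ ∃ K₂ : ℝ, 0 < K₂ ∧
      ∀ L : ℕ, c + 2 ≤ L →
        ∃ h : ℝ,
          Filter.Tendsto
            (fun n : ℕ => Real.log (numAdmissible (L - c - 1) (L - c) L n) / n)
            Filter.atTop (nhds h) ∧
          K₁ * Real.log L / L ≤ h ∧ h ≤ K₂ * Real.log L / L := by
  have hlogc2 : 0 < Real.log (c+2) := by
    apply Real.log_pos
    have : (1:ℝ) < (3:ℝ) := by norm_num
    calc (1:ℝ) < 3 := by norm_num
      _ ≤ (c:ℝ) + 2 := by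
            have : (1:ℝ) ≤ (c:ℝ) := by exact_mod_cast hc
            linarith
  refine ⟨Real.log 2 / (6 * Real.log (c+2)), by positivity, 2*(c+1), by positivity, ?_⟩
  intro L hL
  set N : ℕ → ℕ := fun n => numAdmissible (L - c - 1) (L - c) L n with hN
  have hpos : ∀ n, 1 ≤ N n := numAdmissible_pos hc hL
  have hposR : ∀ n, (1:ℝ) ≤ (N n : ℝ) := fun n => by exact_mod_cast hpos n
  set u : ℕ → ℝ := fun n => Real.log (N n) with hu
  have hsub : Subadditive u := by
    intro m n
    have h1 : N (m + n) ≤ N m * N n := numAdmissible_submul (by omega) m n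
    have e1 := hposR (m+n); have e2 := hposR m; have e3 := hposR n
    have := Real.log_le_log (by linarith) (show ((N (m+n) : ℝ)) ≤ (N m : ℝ) * (N n : ℝ) by
      exact_mod_cast h1)
    rwa [Real.log_mul (by linarith) (by linarith)] at this
  have hbdd : BddBelow (Set.range fun n : ℕ => u n / n) := by
    refine ⟨0, ?_⟩
    rintro x ⟨n, rfl⟩
    have : 0 ≤ u n := Real.log_nonneg (hposR n)
    positivity
  refine ⟨hsub.lim, hsub.tendsto_lim hbdd, ?_, ?_⟩
  · -- lower bound
    have hq : Tendsto (fun q : ℕ => q * (2*L+1)) atTop atTop :=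
      tendsto_atTop_mono (fun q => Nat.le_mul_of_pos_right q (by omega)) tendsto_id
    have hcomp : Tendsto (fun q : ℕ => u (q * (2*L+1)) / ((q * (2*L+1) : ℕ) : ℝ)) atTop
        (nhds hsub.lim) := (hsub.tendsto_lim hbdd).comp hq
    have hD2 : 2 ≤ L - c := by omega
    have hdR : (2:ℝ) ≤ ((L - c : ℕ) : ℝ) := by exact_mod_cast hD2
    have hlogD : 0 ≤ Real.log ((L - c : ℕ) : ℝ) := Real.log_nonneg (by linarith)
    have hB : ∀ q : ℕ, 1 ≤ q →
        Real.log ((L - c : ℕ) : ℝ) / (2*(L:ℝ)+1) ≤ u (q * (2*L+1)) / ((q * (2*L+1) : ℕ) : ℝ) := by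
      intro q hq1
      have h1 : ((L - c : ℕ) : ℝ)^q ≤ (N (q * (2*L+1)) : ℝ) := by
        exact_mod_cast numAdmissible_lower hc hL q
      have h2 : (q:ℝ) * Real.log ((L - c : ℕ) : ℝ) ≤ u (q * (2*L+1)) := by
        rw [hu]
        calc (q:ℝ) * Real.log ((L - c : ℕ) : ℝ) = Real.log (((L - c : ℕ) : ℝ)^q) := by
              rw [Real.log_pow]
          _ ≤ _ := Real.log_le_log (by positivity) h1
      have hcast : ((q * (2*L+1) : ℕ) : ℝ) = (q:ℝ) * (2*(L:ℝ)+1) := by push_cast; ring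
      rw [hcast]
      have hq0 : (0:ℝ) < (q:ℝ) := by exact_mod_cast hq1
      rw [div_le_div_iff₀ (by positivity) (by positivity)]
      have h4 := mul_le_mul_of_nonneg_right h2 (show (0:ℝ) ≤ 2*(L:ℝ)+1 by positivity)
      calc Real.log ((L - c : ℕ) : ℝ) * ((q:ℝ) * (2*(L:ℝ)+1))
          = ((q:ℝ) * Real.log ((L - c : ℕ) : ℝ)) * (2*(L:ℝ)+1) := by ring
        _ ≤ u (q * (2*L+1)) * (2*(L:ℝ)+1) := h4
    have hBh : Real.log ((L - c : ℕ) : ℝ) / (2*(L:ℝ)+1) ≤ hsub.lim :=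
      ge_of_tendsto hcomp (eventually_atTop.2 ⟨1, hB⟩)
    -- now arithmetic: K₁ log L / L ≤ log D / (2L+1)
    have hLR : (3:ℝ) ≤ (L:ℝ) := by
      have : 3 ≤ L := by omega
      exact_mod_cast this
    have hlogL : 0 ≤ Real.log L := Real.log_nonneg (by linarith)
    have step1 : Real.log ((L - c : ℕ) : ℝ) / (3*(L:ℝ)) ≤ Real.log ((L - c : ℕ) : ℝ) / (2*(L:ℝ)+1) := by
      gcongr <;> linarith
    have step2 : (Real.log 2 / (2 * Real.log (c+2))) * Real.log L ≤ Real.log ((L - c : ℕ) : ℝ) := by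
      by_cases hcase : L ≤ (L - c) * (L - c)
      · have hxx : (L:ℝ) ≤ ((L - c : ℕ) : ℝ) * ((L - c : ℕ) : ℝ) := by exact_mod_cast hcase
        have hlog2 : Real.log L ≤ 2 * Real.log ((L - c : ℕ) : ℝ) := by
          calc Real.log L ≤ Real.log (((L - c : ℕ) : ℝ) * ((L - c : ℕ) : ℝ)) :=
                Real.log_le_log (by linarith) hxx
            _ = 2 * Real.log ((L - c : ℕ) : ℝ) := by
                rw [Real.log_mul (by linarith) (by linarith)]; ring
        have hcoef : Real.log 2 / (2 * Real.log (c+2)) ≤ 1/2 := by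
          rw [div_le_div_iff₀ (by positivity) (by norm_num)]
          have : Real.log 2 ≤ Real.log (c+2) := by
            apply Real.log_le_log (by norm_num)
            have : (1:ℝ) ≤ (c:ℝ) := by exact_mod_cast hc
            linarith
          linarith
        calc (Real.log 2 / (2 * Real.log (c+2))) * Real.log L ≤ (1/2) * Real.log L := by
              apply mul_le_mul_of_nonneg_right hcoef hlogL
          _ ≤ Real.log ((L - c : ℕ) : ℝ) := by linarith
      · -- small L : L ≤ (c+2)^2
        push_neg at hcase
        have hsmall : L ≤ (c+2)*(c+2) := by
          have hD2 : 2 ≤ L - c := by omega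
          have hmul : 2 * (L - c) ≤ (L - c) * (L - c) := Nat.mul_le_mul_right _ hD2
          have hcc : 2 * c ≤ (c+2)*(c+2) := by nlinarith
          omega
        have hxr : (L:ℝ) ≤ ((c:ℝ)+2) * ((c:ℝ)+2) := by exact_mod_cast hsmall
        have hc2 : (0:ℝ) < (c:ℝ)+2 := by positivity
        have hlogL2 : Real.log L ≤ 2 * Real.log ((c:ℝ)+2) := by
          calc Real.log L ≤ Real.log (((c:ℝ)+2) * ((c:ℝ)+2)) := Real.log_le_log (by linarith) hxr
            _ = 2 * Real.log ((c:ℝ)+2) := by rw [Real.log_mul (by linarith) (by linarith)]; ring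
        have hlog2pos : (0:ℝ) < Real.log 2 := Real.log_pos (by norm_num)
        calc (Real.log 2 / (2 * Real.log (c+2))) * Real.log L
            ≤ (Real.log 2 / (2 * Real.log (c+2))) * (2 * Real.log ((c:ℝ)+2)) := by
              apply mul_le_mul_of_nonneg_left hlogL2 (by positivity)
          _ = Real.log 2 := by field_simp
          _ ≤ Real.log ((L - c : ℕ) : ℝ) := Real.log_le_log (by norm_num) (by linarith)
      -- end step2
    calc Real.log 2 / (6 * Real.log (c+2)) * Real.log L / L
        = ((Real.log 2 / (2 * Real.log (c+2))) * Real.log L) / (3*(L:ℝ)) := by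
          rw [div_eq_div_iff (by positivity) (by positivity)]
          ring
      _ ≤ Real.log ((L - c : ℕ) : ℝ) / (3*(L:ℝ)) := by
          have h3L : (0:ℝ) < 3*(L:ℝ) := by linarith
          gcongr
      _ ≤ Real.log ((L - c : ℕ) : ℝ) / (2*(L:ℝ)+1) := step1
      _ ≤ hsub.lim := hBh
  · -- upper bound
    have hupper := numAdmissible_upper hc hL
    have hL0 : L ≠ 0 := by omega
    have hLpos : (0:ℝ) < (L:ℝ) := by
      have : 0 < L := by omega
      exact_mod_cast this
    have h1 : hsub.lim ≤ u L / L := hsub.lim_le_div hbdd hL0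
    have h2 : u L ≤ (c+1) * Real.log ((L:ℝ)+1) := by
      rw [hu]
      calc Real.log (N L) ≤ Real.log (((L+1 : ℕ) : ℝ)^(c+1)) := by
            apply Real.log_le_log (by have := hposR L; linarith)
            exact_mod_cast hupper
        _ = (c+1) * Real.log ((L:ℝ)+1) := by
            rw [Real.log_pow]; push_cast; ring
    have h3 : Real.log ((L:ℝ)+1) ≤ 2 * Real.log L := by
      have hx : (L:ℝ)+1 ≤ (L:ℝ) * (L:ℝ) := by
        have : L + 1 ≤ L * L := by nlinarith [hL, hc]
        exact_mod_cast this
      calc Real.log ((L:ℝ)+1) ≤ Real.log ((L:ℝ)*(L:ℝ)) := Real.log_le_log (by positivity) hx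
        _ = 2 * Real.log L := by rw [Real.log_mul (by positivity) (by positivity)]; ring
    have hlogL : 0 ≤ Real.log L := Real.log_nonneg (by
      have : 1 ≤ L := by omega
      exact_mod_cast this)
    calc hsub.lim ≤ u L / L := h1
      _ ≤ ((c+1) * (2 * Real.log L)) / L := by
          gcongr
          calc u L ≤ (c+1) * Real.log ((L:ℝ)+1) := h2
            _ ≤ (c+1) * (2 * Real.log L) := by
                apply mul_le_mul_of_nonneg_left h3 (by positivity)
      _ = 2*((c:ℝ)+1) * Real.log L / L := by ring
end

section
/- With the sets G₁, …, G_k and ℍ as in the context: if ξ ∈ ℍ ∩ G_ℓ for some ℓ ∈ {1, …, k}, then σ^s(ξ) ∉ G_n for every n ∈ {1, …, k} with n ≠ ℓ and every integer s ≥ 0. -/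
/-- The shift by `s ∈ ℤ` on `{0,2}^ℤ` (`zshift 1` is the left shift `σ`). -/
def zshift (s : ℤ) (ξ : ℤ → Bool) : ℤ → Bool := fun n => ξ (n + s)

/-- The finite word `ξ₀ ξ₁ ⋯ ξ_{L−1}` of a bi-infinite sequence `ξ`. -/
def initialWord (L : ℕ) (ξ : ℤ → Bool) : List Bool :=
  List.ofFn fun r : Fin L => ξ ((r : ℕ) : ℤ)

/-- number of `true`s among positions `s, s+1, …, s+n-1`. -/
def tcount (ξ : ℤ → Bool) (s : ℤ) (n : ℕ) : ℕ :=
  ∑ r ∈ Finset.range n, (if ξ (s + r) then 1 else 0)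

lemma tcount_mono_add (ξ : ℤ → Bool) (s : ℤ) {a b : ℕ} (h : a ≤ b) :
    tcount ξ s b ≤ tcount ξ s a + (b - a) := by
  unfold tcount
  rw [Finset.range_eq_Ico, ← Finset.sum_Ico_consecutive _ (Nat.zero_le a) h, Finset.range_eq_Ico]
  have h2 : (∑ r ∈ Finset.Ico a b, (if ξ (s + r) then 1 else 0)) ≤ b - a := by
    calc (∑ r ∈ Finset.Ico a b, (if ξ (s + r) then 1 else 0))
        ≤ ∑ _r ∈ Finset.Ico a b, 1 :=
          Finset.sum_le_sum (fun r _ => by split <;> omega)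
      _ = b - a := by simp
  omega

lemma tcount_succ_right (ξ : ℤ → Bool) (s : ℤ) (n : ℕ) :
    tcount ξ s (n + 1) = tcount ξ s n + (if ξ (s + n) then 1 else 0) := by
  unfold tcount
  rw [Finset.sum_range_succ]

lemma tcount_succ_left (ξ : ℤ → Bool) (s : ℤ) (n : ℕ) :
    tcount ξ s (n + 1) = (if ξ s then 1 else 0) + tcount ξ (s + 1) n := by
  unfold tcount
  rw [Finset.sum_range_succ', add_comm]
  have h0 : (if ξ (s + ((0 : ℕ) : ℤ)) then (1:ℕ) else 0) = (if ξ s then 1 else 0) := by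
    norm_num
  rw [h0]
  congr 1
  apply Finset.sum_congr rfl
  intro r _
  have h : s + (((r : ℕ) + 1 : ℕ) : ℤ) = (s + 1) + ((r : ℕ) : ℤ) := by push_cast; ring
  rw [h]

lemma tcount_step (ξ : ℤ → Bool) (s : ℤ) (n : ℕ) :
    tcount ξ (s + 1) n ≤ tcount ξ s n + 1 ∧ tcount ξ s n ≤ tcount ξ (s + 1) n + 1 := by
  have h1 := tcount_succ_right ξ s n
  have h2 := tcount_succ_left ξ s n
  split_ifs at h1 h2 <;> omega

lemma count_initialWord (ξ : ℤ → Bool) : ∀ (n : ℕ) (u : ℤ),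
    (initialWord n (zshift u ξ)).count true = tcount ξ u n := by
  intro n
  induction n with
  | zero => intro u; simp [initialWord, tcount]
  | succ m ih =>
    intro u
    have htail : (List.ofFn fun r : Fin m => zshift u ξ (((r.succ : Fin (m+1)) : ℕ) : ℤ))
        = initialWord m (zshift (u + 1) ξ) := by
      unfold initialWord
      exact congrArg List.ofFn (funext fun r => by
        show ξ _ = ξ _
        congr 1
        push_cast [Fin.val_succ]
        ring)
    have h1 : initialWord (m + 1) (zshift u ξ)
        = (zshift u ξ) ((((0 : Fin (m+1)) : ℕ)) : ℤ) :: initialWord m (zshift (u + 1) ξ) := by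
      unfold initialWord
      rw [List.ofFn_succ, htail]
      rfl
    rw [h1, List.count_cons, ih (u + 1), tcount_succ_left]
    norm_num
    unfold zshift
    simp only [zero_add]
    by_cases h : ξ u <;> simp [h, add_comm]

/-- Lemma `l:hetero`: with `G₁, …, G_k` and `ℍ` as in the construction,
if `ξ ∈ ℍ ∩ G_ℓ` then `σ^s(ξ) ∉ G_n` for every `n ≠ ℓ` in `{1,…,k}` and every `s ≥ 0`. -/
theorem forward_orbit_stays_in_Gl
    (k : ℕ) (hk : 1 ≤ k) (L i j : ℕ → ℕ)
    (hLmono : ∀ ℓ, 1 ≤ ℓ → ℓ < k → L ℓ < L (ℓ + 1))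
    (hL1 : 3 * k + 1 < L 1)
    (hi1 : i 1 = 0) (hj1 : j 1 = L 1 - (3 * k + 1))
    (hj : ∀ ℓ, 2 ≤ ℓ → ℓ ≤ k → j ℓ = L ℓ - (3 * (k - ℓ) + 4))
    (hi : ∀ ℓ, 2 ≤ ℓ → ℓ ≤ k → i ℓ = j ℓ - 1)
    (hipos : ∀ ℓ, 2 ≤ ℓ → ℓ ≤ k → 1 ≤ i ℓ)
    (hLi : ∀ ℓ, 1 ≤ ℓ → ℓ < k → L ℓ < i (ℓ + 1))
    (G : ℕ → Set (ℤ → Bool))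
    (hG : ∀ ℓ, G ℓ = {ξ | Admissible (i ℓ) (j ℓ) (L ℓ) (initialWord (L ℓ) ξ)})
    (H : Set (ℤ → Bool))
    (hH : H = {ξ | ∀ s : ℤ, ∃ ℓ, 1 ≤ ℓ ∧ ℓ ≤ k ∧ zshift s ξ ∈ G ℓ})
    (ℓ : ℕ) (hℓ1 : 1 ≤ ℓ) (hℓk : ℓ ≤ k)
    (ξ : ℤ → Bool) (hξ : ξ ∈ H ∩ G ℓ) :
    ∀ n, 1 ≤ n → n ≤ k → n ≠ ℓ → ∀ s : ℕ, zshift (s : ℤ) ξ ∉ G n := by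
  obtain ⟨hξH, hξG⟩ := hξ
  rw [hH] at hξH
  -- extract counts from membership in G n
  have memG_count : ∀ (u : ℤ) (n : ℕ), zshift u ξ ∈ G n →
      i n ≤ tcount ξ u (L n) ∧ tcount ξ u (L n) ≤ j n := by
    intro u n hmem
    rw [hG n] at hmem
    have hlen : (initialWord (L n) (zshift u ξ)).length = L n := by
      simp [initialWord]
    have h0 := hmem 0 (by rw [hlen]; omega)
    have hwin : winCount (initialWord (L n) (zshift u ξ)) 0 (L n)
        = tcount ξ u (L n) := by
      unfold winCount
      rw [List.drop_zero, List.take_of_length_le (le_of_eq hlen),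
        count_initialWord]
    rw [hwin] at h0
    exact h0
  -- quantified count facts
  have memfact : ∀ (w : ℤ) (n : ℕ), 1 ≤ n → n ≤ k → zshift w ξ ∈ G n →
      (n = 1 ∧ tcount ξ w (L n) + (3 * k + 1) ≤ L n) ∨
      (2 ≤ n ∧ tcount ξ w (L n) + (3 * (k - n) + 4) ≤ L n
        ∧ L n ≤ tcount ξ w (L n) + (3 * (k - n) + 4) + 1) := by
    intro w n hn1 hnk hmem
    have hcnt := memG_count w n hmem
    by_cases h1 : n = 1
    · left
      refine ⟨h1, ?_⟩
      subst h1
      rw [hj1] at hcnt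
      omega
    · right
      have h2 : 2 ≤ n := by omega
      have hjn := hj n h2 hnk
      have hin := hi n h2 hnk
      have hip := hipos n h2 hnk
      refine ⟨h2, ?_, ?_⟩ <;> omega
  -- strict monotonicity of L on [1,k]
  have hLlt : ∀ (b a : ℕ), 1 ≤ a → a < b → b ≤ k → L a < L b := by
    intro b
    induction b with
    | zero => intro a _ h _; omega
    | succ c ih =>
      intro a ha hab hbk
      rcases Nat.eq_or_lt_of_le (Nat.lt_succ_iff.mp hab) with h | h
      · subst h; exact hLmono a ha (by omega)
      · exact lt_trans (ih a ha h (by omega)) (hLmono c (by omega) (by omega))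
  -- key exclusion lemma
  have key : ∀ (u v : ℤ), (v = u ∨ v = u + 1) → ∀ m m', 1 ≤ m → m ≤ k →
      1 ≤ m' → m' ≤ k → zshift u ξ ∈ G m → zshift v ξ ∈ G m' → m = m' := by
    intro u v huv m m' hm1 hmk hm'1 hm'k hmemu hmemv
    by_contra hne
    have f1 := memfact u m hm1 hmk hmemu
    have f2 := memfact v m' hm'1 hm'k hmemv
    have hsm : tcount ξ v (L m) ≤ tcount ξ u (L m) + 1 ∧
        tcount ξ u (L m) ≤ tcount ξ v (L m) + 1 := by
      rcases huv with rfl | rfl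
      · omega
      · exact tcount_step ξ u (L m)
    have hsm' : tcount ξ v (L m') ≤ tcount ξ u (L m') + 1 ∧
        tcount ξ u (L m') ≤ tcount ξ v (L m') + 1 := by
      rcases huv with rfl | rfl
      · omega
      · exact tcount_step ξ u (L m')
    rcases Nat.lt_or_ge m m' with hlt | hge
    · have hL : L m < L m' := hLlt m' m hm1 hlt hm'k
      have hmu := tcount_mono_add ξ u (le_of_lt hL)
      have hmv := tcount_mono_add ξ v (le_of_lt hL)
      rcases f1 with ⟨e1, g1⟩ | ⟨e1, g1, g1'⟩ <;>
        rcases f2 with ⟨e2, g2⟩ | ⟨e2, g2, g2'⟩ <;> omega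
    · have hlt : m' < m := by omega
      have hL : L m' < L m := hLlt m m' hm'1 hlt hmk
      have hmu := tcount_mono_add ξ u (le_of_lt hL)
      have hmv := tcount_mono_add ξ v (le_of_lt hL)
      rcases f1 with ⟨e1, g1⟩ | ⟨e1, g1, g1'⟩ <;>
        rcases f2 with ⟨e2, g2⟩ | ⟨e2, g2, g2'⟩ <;> omega
  -- the forward orbit stays in G ℓ
  have horbit : ∀ s : ℕ, zshift (s : ℤ) ξ ∈ G ℓ := by
    intro s
    induction s with
    | zero =>
      have h0 : zshift ((0 : ℕ) : ℤ) ξ = ξ := by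
        funext x; simp [zshift]
      rw [h0]; exact hξG
    | succ s ih =>
      obtain ⟨m, hm1, hmk, hmem⟩ := hξH ((s : ℤ) + 1)
      have hcast : (((s + 1 : ℕ)) : ℤ) = (s : ℤ) + 1 := by push_cast; ring
      have heq := key (s : ℤ) ((s : ℤ) + 1) (Or.inr rfl) ℓ m hℓ1 hℓk hm1 hmk ih hmem
      rw [← heq] at hmem
      rwa [hcast]
  intro n hn1 hnk hne s hmem
  exact hne (key (s : ℤ) (s : ℤ) (Or.inl rfl) n ℓ hn1 hnk hℓ1 hℓk hmem (horbit s))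
end

section
/- Let 0 ≤ i ≤ j ≤ L be integers with L ≥ 1 and let ξ ∈ H(i,j,L). Then i/L ≤ liminf_{n→∞} (1/n) #{0 ≤ m < n : ξ_m = 2} and limsup_{n→∞} (1/n) #{0 ≤ m < n : ξ_m = 2} ≤ j/L. -/
/-- The count over an initial segment `[0, n)`. -/
def Fcnt (ξ : ℤ → Bool) (n : ℕ) : ℕ :=
  ((Finset.range n).filter fun m : ℕ => ξ ((m : ℕ) : ℤ) = true).card

lemma Fcnt_add (ξ : ℤ → Bool) (n L : ℕ) :
    Fcnt ξ (n + L) = Fcnt ξ n + zwinCount ξ (n : ℤ) L := by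
  unfold Fcnt zwinCount
  rw [Finset.card_filter, Finset.card_filter, Finset.card_filter, Finset.sum_range_add]
  congr 1


lemma Fcnt_mono (ξ : ℤ → Bool) {a b : ℕ} (h : a ≤ b) : Fcnt ξ a ≤ Fcnt ξ b :=
  Finset.card_le_card (Finset.filter_subset_filter _ (Finset.range_subset_range.2 h))

lemma Fcnt_mul_bounds {i j L : ℕ} {ξ : ℤ → Bool} (hξ : ξ ∈ Hset i j L) (q : ℕ) :
    q * i ≤ Fcnt ξ (q * L) ∧ Fcnt ξ (q * L) ≤ q * j := by
  induction q with
  | zero => simp [Fcnt]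
  | succ q ih =>
    have hw := hξ ((q * L : ℕ) : ℤ)
    have hadd : Fcnt ξ (q * L + L) = Fcnt ξ (q * L) + zwinCount ξ ((q * L : ℕ) : ℤ) L :=
      Fcnt_add ξ (q * L) L
    have hQ : (q + 1) * L = q * L + L := by ring
    constructor
    · rw [hQ, hadd]
      have : (q + 1) * i = q * i + i := by ring
      omega
    · rw [hQ, hadd]
      have : (q + 1) * j = q * j + j := by ring
      omega

lemma le_div_add_one_mul (n : ℕ) {L : ℕ} (hL : 0 < L) : n ≤ (n / L + 1) * L := by
  have h1 := Nat.div_add_mod n L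
  have h2 := Nat.mod_lt n hL
  calc n = L * (n / L) + n % L := h1.symm
    _ ≤ L * (n / L) + L := by omega
    _ = (n / L + 1) * L := by ring

lemma Fcnt_bounds {i j L : ℕ} (hL : 1 ≤ L) {ξ : ℤ → Bool} (hξ : ξ ∈ Hset i j L) (n : ℕ) :
    (n / L) * i ≤ Fcnt ξ n ∧ Fcnt ξ n ≤ (n / L + 1) * j := by
  set q := n / L with hq
  have h1 : q * L ≤ n := by rw [hq]; exact Nat.div_mul_le_self n L
  have h2 : n ≤ (q + 1) * L := by rw [hq]; exact le_div_add_one_mul n (by omega)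
  have hm := Fcnt_mul_bounds hξ q
  have hm' := Fcnt_mul_bounds hξ (q + 1)
  exact ⟨le_trans hm.1 (Fcnt_mono ξ h1), le_trans (Fcnt_mono ξ h2) hm'.2⟩

/-- for `ξ ∈ H(i,j,L)`, the asymptotic frequency of the symbol `2` along
the forward orbit satisfies
`i/L ≤ liminf (1/n)·#{0 ≤ m < n : ξ_m = 2}` and `limsup (1/n)·#{0 ≤ m < n : ξ_m = 2} ≤ j/L`. -/
theorem frequency_bounds
    (i j L : ℕ) (hL : 1 ≤ L) (hij : i ≤ j) (hjL : j ≤ L)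
    (ξ : ℤ → Bool) (hξ : ξ ∈ Hset i j L) :
    (i : ℝ) / L ≤
      Filter.liminf
        (fun n : ℕ =>
          (((Finset.range n).filter fun m : ℕ => ξ ((m : ℕ) : ℤ) = true).card : ℝ) / n)
        Filter.atTop ∧
    Filter.limsup
        (fun n : ℕ =>
          (((Finset.range n).filter fun m : ℕ => ξ ((m : ℕ) : ℤ) = true).card : ℝ) / n)
        Filter.atTop ≤ (j : ℝ) / L := by
  set f : ℕ → ℝ := fun n =>
    (((Finset.range n).filter fun m : ℕ => ξ ((m : ℕ) : ℤ) = true).card : ℝ) / n with hf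
  have hfF : ∀ n, f n = (Fcnt ξ n : ℝ) / n := fun n => rfl
  have hLpos : (0 : ℝ) < L := by exact_mod_cast hL
  -- pointwise bounds for n ≥ 1
  have hlow : ∀ n : ℕ, 1 ≤ n → (i : ℝ) / L - (i : ℝ) / n ≤ f n := by
    intro n hn
    have hnpos : (0 : ℝ) < n := by exact_mod_cast hn
    have hb := (Fcnt_bounds hL hξ n).1
    have hq : ((n : ℝ) / L - 1) ≤ (n / L : ℕ) := by
      have h2 : n ≤ (n / L + 1) * L := le_div_add_one_mul n (by omega)
      have h2' : (n : ℝ) ≤ ((n / L : ℕ) : ℝ) * L + L := by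
        have : ((n : ℕ) : ℝ) ≤ (((n / L + 1) * L : ℕ) : ℝ) := by exact_mod_cast h2
        push_cast at this; linarith
      rw [sub_le_iff_le_add, div_le_iff₀ hLpos]
      nlinarith
    have hb' : ((n : ℝ) / L - 1) * i ≤ (Fcnt ξ n : ℝ) := by
      have hbn : ((n / L : ℕ) : ℝ) * i ≤ (Fcnt ξ n : ℝ) := by exact_mod_cast hb
      have hi0 : (0 : ℝ) ≤ i := Nat.cast_nonneg i
      nlinarith
    rw [hfF, le_div_iff₀ hnpos]
    have hid : ((i : ℝ) / L - (i : ℝ) / n) * n = ((n : ℝ) / L - 1) * i := by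
      field_simp
    rw [hid]
    exact hb'
  have hhigh : ∀ n : ℕ, 1 ≤ n → f n ≤ (j : ℝ) / L + (j : ℝ) / n := by
    intro n hn
    have hnpos : (0 : ℝ) < n := by exact_mod_cast hn
    have hb := (Fcnt_bounds hL hξ n).2
    have hq : ((n / L : ℕ) : ℝ) ≤ (n : ℝ) / L := by
      have h1 : (n / L) * L ≤ n := Nat.div_mul_le_self n L
      have h1' : ((n / L : ℕ) : ℝ) * L ≤ (n : ℝ) := by exact_mod_cast h1
      rw [le_div_iff₀ hLpos]; linarith
    have hb' : (Fcnt ξ n : ℝ) ≤ ((n : ℝ) / L + 1) * j := by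
      have hbn : (Fcnt ξ n : ℝ) ≤ (((n / L + 1) * j : ℕ) : ℝ) := by exact_mod_cast hb
      push_cast at hbn
      have hj0 : (0 : ℝ) ≤ j := Nat.cast_nonneg j
      nlinarith
    rw [hfF, div_le_iff₀ hnpos]
    have hid : ((j : ℝ) / L + (j : ℝ) / n) * n = ((n : ℝ) / L + 1) * j := by
      field_simp
    rw [hid]
    exact hb'
  -- global bounds on f
  have hf0 : ∀ n, (0 : ℝ) ≤ f n := by
    intro n
    exact div_nonneg (Nat.cast_nonneg _) (Nat.cast_nonneg _)
  have hf1 : ∀ n, f n ≤ 1 := by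
    intro n
    rcases Nat.eq_zero_or_pos n with h | h
    · simp [hfF, h, Fcnt]
    · have hnpos : (0 : ℝ) < n := by exact_mod_cast h
      rw [hfF, div_le_one hnpos]
      exact_mod_cast Fcnt_mono ξ (le_refl n) |>.trans
        (by simpa [Fcnt] using Finset.card_filter_le (Finset.range n) _)
  -- limits of the comparison sequences
  have htend0 : Filter.Tendsto (fun n : ℕ => (1 : ℝ) / n) Filter.atTop (nhds 0) :=
    tendsto_one_div_atTop_nhds_zero_nat
  have hg : Filter.Tendsto (fun n : ℕ => (i : ℝ) / L - (i : ℝ) / n) Filter.atTop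
      (nhds ((i : ℝ) / L)) := by
    have : Filter.Tendsto (fun n : ℕ => (i : ℝ) / n) Filter.atTop (nhds 0) := by
      have := htend0.const_mul (i : ℝ)
      simpa [div_eq_mul_inv] using this
    simpa using tendsto_const_nhds.sub this
  have hh : Filter.Tendsto (fun n : ℕ => (j : ℝ) / L + (j : ℝ) / n) Filter.atTop
      (nhds ((j : ℝ) / L)) := by
    have : Filter.Tendsto (fun n : ℕ => (j : ℝ) / n) Filter.atTop (nhds 0) := by
      have := htend0.const_mul (j : ℝ)
      simpa [div_eq_mul_inv] using this
    simpa using tendsto_const_nhds.add this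
  constructor
  · have h1 : Filter.liminf (fun n : ℕ => (i : ℝ) / L - (i : ℝ) / n) Filter.atTop
        = (i : ℝ) / L := hg.liminf_eq
    rw [← h1]
    refine Filter.liminf_le_liminf ?_ ?_ ?_
    · filter_upwards [Filter.eventually_ge_atTop 1] with n hn using hlow n hn
    · exact Filter.isBoundedUnder_of ⟨(i : ℝ) / L - (i : ℝ), fun n => by
        rcases Nat.eq_zero_or_pos n with h | h
        · simp only [h, Nat.cast_zero, div_zero, sub_zero]
          have : (0:ℝ) ≤ i := Nat.cast_nonneg i
          linarith
        · have hnpos : (0 : ℝ) < n := by exact_mod_cast h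
          have hn1 : (1 : ℝ) ≤ n := by exact_mod_cast h
          have : (i : ℝ) / n ≤ i := by
            rw [div_le_iff₀ hnpos]; nlinarith [Nat.cast_nonneg (α := ℝ) i]
          linarith⟩
    · exact Filter.isCoboundedUnder_ge_of_le _ hf1
  · have h1 : Filter.limsup (fun n : ℕ => (j : ℝ) / L + (j : ℝ) / n) Filter.atTop
        = (j : ℝ) / L := hh.limsup_eq
    rw [← h1]
    refine Filter.limsup_le_limsup ?_ ?_ ?_
    · filter_upwards [Filter.eventually_ge_atTop 1] with n hn using hhigh n hn
    · exact Filter.isCoboundedUnder_le_of_le Filter.atTop hf0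
    · exact Filter.isBoundedUnder_of ⟨(j : ℝ) / L + (j : ℝ), fun n => by
        rcases Nat.eq_zero_or_pos n with h | h
        · simp [h]
        · have hnpos : (0 : ℝ) < n := by exact_mod_cast h
          have hn1 : (1 : ℝ) ≤ n := by exact_mod_cast h
          have : (j : ℝ) / n ≤ j := by
            rw [div_le_iff₀ hnpos]; nlinarith [Nat.cast_nonneg (α := ℝ) j]
          linarith⟩
end

section
/- Let f₀ : [0,1] → [0,1] be a C¹ increasing diffeomorphism of [0,1] onto itself with f₀(0) = 0, f₀(1) = 1 and f₀(x) > x for all x ∈ (0,1). Let γ ∈ (0,1) and f₁(x) = γ(1−x). Let b ∈ (0,1) be such that f₀'(x) > 1 for all x ∈ [0,b], and let b'' < b' < b in (0,b) be the points with f₀(b'') = b' and f₀(b') = b. Assume there exist κ > 1 and N ∈ ℕ such that every closed interval J ⊆ [b'', b] admits an integer n = n(J) ≤ N with (f₁ ∘ f₀ⁿ)(J) ⊆ (0, b] and |(f₁ ∘ f₀ⁿ)'(x)| ≥ κ for all x ∈ J. Then for every closed interval J ⊆ [b'', b] with nonempty interior there exist r ≥ 1 and maps g₁, …, g_r, each equal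 to f₀ or to f₁, such that the composition g = g_r ∘ ⋯ ∘ g₁ satisfies |g'(x)| ≥ κ for all x ∈ J and g(J) ⊇ [b'', b']. -/
section ExpandingItineraryAux

/-- Fold a list of maps, applying them left-to-right. -/
private def foldComp (gs : List (ℝ → ℝ)) : ℝ → ℝ := fun y => gs.foldl (fun z g => g z) y

private lemma foldComp_nil : foldComp [] = id := rfl

private lemma foldComp_cons (g : ℝ → ℝ) (gs : List (ℝ → ℝ)) :
    foldComp (g :: gs) = foldComp gs ∘ g := rfl

private lemma foldComp_append (gs₁ gs₂ : List (ℝ → ℝ)) :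
    foldComp (gs₁ ++ gs₂) = foldComp gs₂ ∘ foldComp gs₁ := by
  funext y; simp [foldComp, List.foldl_append]

private lemma foldComp_replicate (n : ℕ) (f : ℝ → ℝ) :
    foldComp (List.replicate n f) = f^[n] := by
  induction n with
  | zero => rfl
  | succ n ih =>
    rw [List.replicate_succ, foldComp_cons, ih, Function.iterate_succ]

private lemma foldComp_smooth {I : Set ℝ} {gs : List (ℝ → ℝ)}
    (h : ∀ g ∈ gs, Set.MapsTo g I I ∧ ContinuousOn g I ∧ DifferentiableOn ℝ g I) :
    Set.MapsTo (foldComp gs) I I ∧ ContinuousOn (foldComp gs) I ∧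
      DifferentiableOn ℝ (foldComp gs) I := by
  induction gs with
  | nil =>
    exact ⟨fun x hx => hx, continuousOn_id, differentiableOn_id⟩
  | cons g gs ih =>
    obtain ⟨hm, hc, hd⟩ := h g List.mem_cons_self
    obtain ⟨hm', hc', hd'⟩ := ih (fun g hg => h g (List.mem_cons_of_mem _ hg))
    rw [foldComp_cons]
    exact ⟨hm'.comp hm, hc'.comp hc hm, hd'.comp hd hm⟩

/-- Mean value expansion estimate. -/
private lemma mvt_expand {F : ℝ → ℝ} {m p q : ℝ} (hp : 0 < p) (hpq : p < q) (hq : q < 1)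
    (hcont : ContinuousOn F (Set.Icc 0 1)) (hdiff : DifferentiableOn ℝ F (Set.Icc 0 1))
    (hbound : ∀ ξ ∈ Set.Ioo p q, m ≤ |derivWithin F (Set.Icc 0 1) ξ|) :
    m * (q - p) ≤ |F q - F p| := by
  have hsub : Set.Icc p q ⊆ Set.Icc 0 1 := Set.Icc_subset_Icc hp.le hq.le
  have hderiv : ∀ ξ ∈ Set.Ioo p q, HasDerivAt F (derivWithin F (Set.Icc 0 1) ξ) ξ := by
    intro ξ hξ
    have hmem : ξ ∈ Set.Icc (0:ℝ) 1 := ⟨by linarith [hξ.1], by linarith [hξ.2]⟩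
    exact ((hdiff ξ hmem).hasDerivWithinAt).hasDerivAt
      (Icc_mem_nhds (by linarith [hξ.1]) (by linarith [hξ.2]))
  obtain ⟨ξ, hξ, heq⟩ := exists_hasDerivAt_eq_slope F _ hpq (hcont.mono hsub) hderiv
  have hb := hbound ξ hξ
  rw [heq, abs_div, abs_of_pos (by linarith : (0:ℝ) < q - p)] at hb
  exact (le_div_iff₀ (by linarith)).mp hb

private lemma iterate_monotoneOn {f : ℝ → ℝ} {I : Set ℝ} (hm : MonotoneOn f I)
    (hmap : Set.MapsTo f I I) (n : ℕ) : MonotoneOn (f^[n]) I := by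
  induction n with
  | zero => intro x _ y _ hxy; simpa using hxy
  | succ n ih =>
    intro x hx y hy hxy
    rw [Function.iterate_succ_apply, Function.iterate_succ_apply]
    exact ih (hmap hx) (hmap hy) (hm hx hy hxy)

end ExpandingItineraryAux

/-- expanding itineraries, Lemma `l.xJ`: given the interval maps `f₀`
(a `C¹` increasing diffeomorphism of `[0,1]` with `f₀(0)=0`, `f₀(1)=1`, `f₀(x)>x` on
`(0,1)`) and `f₁(x)=γ(1−x)`, a point `b` with `f₀' > 1` on `[0,b]`, pre-images
`b'' < b' < b` of `b` (i.e. `f₀(b'')=b'`, `f₀(b')=b`), and the expansion hypothesis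
(for every closed interval `J ⊆ [b'',b]` some `n = n(J) ≤ N` has
`f₁∘f₀ⁿ(J) ⊆ (0,b]` and `|(f₁∘f₀ⁿ)'| ≥ κ` on `J`), then every closed interval
`J = [c,d] ⊆ [b'',b]` with nonempty interior admits a finite composition
`g = g_r ∘ ⋯ ∘ g₁` of the maps `f₀, f₁` with `|g'| ≥ κ` on `J` and `g(J) ⊇ [b'',b']`. -/
theorem expanding_itinerary
    (f₀ : ℝ → ℝ) (γ : ℝ) (hγ : γ ∈ Set.Ioo (0 : ℝ) 1)
    (hC1 : ContDiffOn ℝ 1 f₀ (Set.Icc 0 1))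
    (hmono : StrictMonoOn f₀ (Set.Icc 0 1))
    (hbij : Set.BijOn f₀ (Set.Icc 0 1) (Set.Icc 0 1))
    (hf00 : f₀ 0 = 0) (hf01 : f₀ 1 = 1)
    (habove : ∀ x ∈ Set.Ioo (0 : ℝ) 1, x < f₀ x)
    (f₁ : ℝ → ℝ) (hf₁ : ∀ x, f₁ x = γ * (1 - x))
    (b b' b'' : ℝ) (hb : b ∈ Set.Ioo (0 : ℝ) 1)
    (hder : ∀ x ∈ Set.Icc 0 b, 1 < derivWithin f₀ (Set.Icc 0 1) x)
    (hb''pos : 0 < b'') (hb''b' : b'' < b') (hb'b : b' < b)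
    (hfb'' : f₀ b'' = b') (hfb' : f₀ b' = b)
    (κ : ℝ) (hκ : 1 < κ) (N : ℕ)
    (hexp : ∀ c d : ℝ, b'' ≤ c → c ≤ d → d ≤ b →
      ∃ n ≤ N,
        (∀ x ∈ Set.Icc c d, f₁ (f₀^[n] x) ∈ Set.Ioc 0 b) ∧
        ∀ x ∈ Set.Icc c d,
          κ ≤ |derivWithin (fun y => f₁ (f₀^[n] y)) (Set.Icc 0 1) x|)
    (c d : ℝ) (hc : b'' ≤ c) (hcd : c < d) (hd : d ≤ b) :
    ∃ (r : ℕ) (gs : List (ℝ → ℝ)),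
      1 ≤ r ∧ gs.length = r ∧
      (∀ g ∈ gs, g = f₀ ∨ g = f₁) ∧
      (∀ x ∈ Set.Icc c d,
        κ ≤ |derivWithin (fun y => gs.foldl (fun z g => g z) y) (Set.Icc 0 1) x|) ∧
      Set.Icc b'' b' ⊆ (fun y => gs.foldl (fun z g => g z) y) '' Set.Icc c d := by
  obtain ⟨hb0, hb1⟩ := hb
  obtain ⟨hγ0, hγ1⟩ := hγ
  have hI01 : (0:ℝ) < 1 := one_pos
  -- basic properties of the two generators on I = [0,1]
  have hf₀map : Set.MapsTo f₀ (Set.Icc 0 1) (Set.Icc 0 1) := hbij.mapsTo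
  have hf₀cont : ContinuousOn f₀ (Set.Icc 0 1) := hC1.continuousOn
  have hf₀diff : DifferentiableOn ℝ f₀ (Set.Icc 0 1) := hC1.differentiableOn one_ne_zero
  have hf₁eq : f₁ = fun x => γ * (1 - x) := funext hf₁
  have hf₁map : Set.MapsTo f₁ (Set.Icc 0 1) (Set.Icc 0 1) := by
    intro x hx
    rw [hf₁ x]
    constructor
    · nlinarith [hx.1, hx.2]
    · nlinarith [hx.1, hx.2]
  have hf₁cont : ContinuousOn f₁ (Set.Icc 0 1) := by
    rw [hf₁eq]; fun_prop
  have hf₁diff : DifferentiableOn ℝ f₁ (Set.Icc 0 1) := by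
    rw [hf₁eq]; fun_prop
  have hgen : ∀ g : ℝ → ℝ, (g = f₀ ∨ g = f₁) →
      Set.MapsTo g (Set.Icc 0 1) (Set.Icc 0 1) ∧ ContinuousOn g (Set.Icc 0 1) ∧
        DifferentiableOn ℝ g (Set.Icc 0 1) := by
    rintro g (rfl | rfl)
    · exact ⟨hf₀map, hf₀cont, hf₀diff⟩
    · exact ⟨hf₁map, hf₁cont, hf₁diff⟩
  have hsmooth : ∀ gs : List (ℝ → ℝ), (∀ g ∈ gs, g = f₀ ∨ g = f₁) →
      Set.MapsTo (foldComp gs) (Set.Icc 0 1) (Set.Icc 0 1) ∧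
        ContinuousOn (foldComp gs) (Set.Icc 0 1) ∧
        DifferentiableOn ℝ (foldComp gs) (Set.Icc 0 1) := by
    intro gs h
    exact foldComp_smooth (fun g hg => hgen g (h g hg))
  -- uniform lower bound λ₀ for f₀' on [0,b]
  have hderivCont : ContinuousOn (derivWithin f₀ (Set.Icc 0 1)) (Set.Icc 0 1) :=
    hC1.continuousOn_derivWithin (uniqueDiffOn_Icc hI01) le_rfl
  obtain ⟨x₀, hx₀mem, hx₀min⟩ := (isCompact_Icc (a := (0:ℝ)) (b := b)).exists_isMinOn
    ⟨0, by constructor <;> linarith⟩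
    (hderivCont.mono (Set.Icc_subset_Icc le_rfl hb1.le))
  set lam := derivWithin f₀ (Set.Icc 0 1) x₀ with hlamdef
  have hlam1 : 1 < lam := hder x₀ hx₀mem
  have hlamlow : ∀ z ∈ Set.Icc 0 b, lam ≤ derivWithin f₀ (Set.Icc 0 1) z := fun z hz => hx₀min hz
  set μ := min lam κ with hμdef
  have hμ1 : 1 < μ := lt_min hlam1 hκ
  have hμlam : μ ≤ lam := min_le_left _ _
  have hμκ : μ ≤ κ := min_le_right _ _
  have hIcd : Set.Icc c d ⊆ Set.Icc (0:ℝ) 1 :=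
    Set.Icc_subset_Icc (by linarith) (by linarith)
  have hcmem : c ∈ Set.Icc c d := ⟨le_rfl, hcd.le⟩
  have hdmem : d ∈ Set.Icc c d := ⟨hcd.le, le_rfl⟩
  have hudI : UniqueDiffOn ℝ (Set.Icc (0:ℝ) 1) := uniqueDiffOn_Icc hI01
  -- a block `f₁ ∘ f₀^[n]`
  have hblock : ∀ n : ℕ, foldComp (List.replicate n f₀ ++ [f₁]) = fun y => f₁ (f₀^[n] y) := by
    intro n
    funext y
    rw [foldComp_append, foldComp_replicate]
    rfl
  have hblockelem : ∀ n : ℕ, ∀ g ∈ List.replicate n f₀ ++ [f₁], g = f₀ ∨ g = f₁ := by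
    intro n g hg
    rcases List.mem_append.mp hg with h | h
    · exact Or.inl (List.eq_of_mem_replicate h)
    · simp at h; exact Or.inr h
  -- antitonicity of blocks
  have hblockanti : ∀ n : ℕ, AntitoneOn (foldComp (List.replicate n f₀ ++ [f₁])) (Set.Icc 0 1) := by
    intro n
    rw [hblock n]
    intro x hx y hy hxy
    have h1 := iterate_monotoneOn hmono.monotoneOn hf₀map n hx hy hxy
    simp only [hf₁]
    nlinarith
  -- the key induction
  have key : ∀ n : ℕ, ∀ gs : List (ℝ → ℝ), gs ≠ [] → (∀ g ∈ gs, g = f₀ ∨ g = f₁) →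
      (∀ x ∈ Set.Icc c d, κ ≤ |derivWithin (foldComp gs) (Set.Icc 0 1) x|) →
      (∀ x ∈ Set.Icc c d, foldComp gs x ∈ Set.Ioc 0 b) →
      (∀ x ∈ Set.Icc c d, min (foldComp gs c) (foldComp gs d) ≤ foldComp gs x ∧
        foldComp gs x ≤ max (foldComp gs c) (foldComp gs d)) →
      b ≤ μ ^ n * |foldComp gs d - foldComp gs c| →
      ∃ gs' : List (ℝ → ℝ), gs' ≠ [] ∧ (∀ g ∈ gs', g = f₀ ∨ g = f₁) ∧
        (∀ x ∈ Set.Icc c d, κ ≤ |derivWithin (foldComp gs') (Set.Icc 0 1) x|) ∧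
        Set.Icc b'' b' ⊆ (foldComp gs') '' Set.Icc c d := by
    intro n
    induction n with
    | zero =>
      intro gs _ _ _ hrange _ hmeas
      exfalso
      have h1 := hrange c hcmem
      have h2 := hrange d hdmem
      rw [pow_zero, one_mul] at hmeas
      rcases abs_cases (foldComp gs d - foldComp gs c) with ⟨he, _⟩ | ⟨he, _⟩ <;>
        rw [he] at hmeas <;> linarith [h1.1, h1.2, h2.1, h2.2]
    | succ n ih =>
      intro gs hne helem hderiv hrange hbtw hmeas
      obtain ⟨hmap, hcont, hdiff⟩ := hsmooth gs helem
      set Fc := foldComp gs c with hFcdef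
      set Fd := foldComp gs d with hFddef
      set p := min Fc Fd with hpdef
      set q := max Fc Fd with hqdef
      have hFcr := hrange c hcmem
      have hFdr := hrange d hdmem
      have hppos : 0 < p := lt_min hFcr.1 hFdr.1
      have hqb : q ≤ b := max_le hFcr.2 hFdr.2
      have hqp_abs : q - p = |Fd - Fc| := by
        rcases le_total Fc Fd with h | h
        · rw [hpdef, hqdef, min_eq_left h, max_eq_right h, abs_of_nonneg (by linarith)]
        · rw [hpdef, hqdef, min_eq_right h, max_eq_left h, abs_of_nonpos (by linarith)]; ring
      have hpq : p < q := by
        by_contra hcon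
        push_neg at hcon
        have : |Fd - Fc| ≤ 0 := by linarith [hqp_abs]
        have hpow : (0:ℝ) < μ ^ (n+1) := pow_pos (by linarith) _
        nlinarith [abs_nonneg (Fd - Fc)]
      have hlpos : 0 < q - p := by linarith
      by_cases hdone : p ≤ b'' ∧ b' ≤ q
      · -- finished: image covers [b'', b']
        refine ⟨gs, hne, helem, hderiv, ?_⟩
        have hsub1 : Set.Icc b'' b' ⊆ Set.Icc p q := Set.Icc_subset_Icc hdone.1 hdone.2
        have hsub2 : Set.Icc p q ⊆ foldComp gs '' Set.Icc c d := by
          have := intermediate_value_uIcc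
            (f := foldComp gs) (a := c) (b := d)
            (by rw [Set.uIcc_of_le hcd.le]; exact hcont.mono hIcd)
          rw [Set.uIcc_of_le hcd.le] at this
          intro z hz
          apply this
          rcases le_total Fc Fd with h | h
          · rw [Set.uIcc_of_le h]
            rw [min_eq_left h] at hpdef
            rw [max_eq_right h] at hqdef
            exact ⟨by rw [hpdef] at hz; exact hz.1, by rw [hqdef] at hz; exact hz.2⟩
          · rw [Set.uIcc_of_ge h]
            rw [min_eq_right h] at hpdef
            rw [max_eq_left h] at hqdef
            exact ⟨by rw [hpdef] at hz; exact hz.1, by rw [hqdef] at hz; exact hz.2⟩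
        exact hsub1.trans hsub2
      · by_cases hql : q < b'
        · -- apply f₀ once
          set gs' := gs ++ [f₀] with hgs'def
          have hfoldeq : foldComp gs' = f₀ ∘ foldComp gs := by
            rw [hgs'def, foldComp_append]
            rfl
          have helem' : ∀ g ∈ gs', g = f₀ ∨ g = f₁ := by
            intro g hg
            rcases List.mem_append.mp hg with h | h
            · exact helem g h
            · simp at h; exact Or.inl h
          -- range of the new composition
          have hrange' : ∀ x ∈ Set.Icc c d, foldComp gs' x ∈ Set.Ioc 0 b := by
            intro x hx
            rw [hfoldeq]
            have hFx := hrange x hx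
            have hFxI : foldComp gs x ∈ Set.Icc (0:ℝ) 1 := ⟨hFx.1.le, by linarith [hFx.2]⟩
            constructor
            · have := hmono (Set.left_mem_Icc.mpr hI01.le) hFxI hFx.1
              rw [hf00] at this
              exact this
            · have hxq : foldComp gs x ≤ q := (hbtw x hx).2
              have hxb' : foldComp gs x < b' := lt_of_le_of_lt hxq hql
              have := hmono hFxI (⟨by linarith, by linarith⟩ : b' ∈ Set.Icc (0:ℝ) 1) hxb'
              rw [hfb'] at this
              exact this.le
          -- derivative bound
          have hderiv' : ∀ x ∈ Set.Icc c d, κ ≤ |derivWithin (foldComp gs') (Set.Icc 0 1) x| := by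
            intro x hx
            have hxI := hIcd hx
            have hFx := hrange x hx
            have hFxI : foldComp gs x ∈ Set.Icc (0:ℝ) 1 := ⟨hFx.1.le, by linarith [hFx.2]⟩
            rw [hfoldeq, derivWithin_comp (x := x) (hf₀diff _ hFxI) (hdiff x hxI) hmap,
              abs_mul]
            have h1 : 1 ≤ |derivWithin f₀ (Set.Icc 0 1) (foldComp gs x)| := by
              have := hder _ (⟨hFx.1.le, hFx.2⟩ : foldComp gs x ∈ Set.Icc 0 b)
              rw [abs_of_pos (by linarith)]
              linarith
            have h2 := hderiv x hx
            have h3 := mul_le_mul h1 h2 (by linarith) (abs_nonneg _)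
            rw [one_mul] at h3
            exact h3
          -- betweenness
          have hbtw' : ∀ x ∈ Set.Icc c d, min (foldComp gs' c) (foldComp gs' d) ≤ foldComp gs' x ∧
              foldComp gs' x ≤ max (foldComp gs' c) (foldComp gs' d) := by
            intro x hx
            have hFx := hrange x hx
            have hFxI : foldComp gs x ∈ Set.Icc (0:ℝ) 1 := ⟨hFx.1.le, by linarith [hFx.2]⟩
            have hFcI : Fc ∈ Set.Icc (0:ℝ) 1 := ⟨hFcr.1.le, by linarith [hFcr.2]⟩
            have hFdI : Fd ∈ Set.Icc (0:ℝ) 1 := ⟨hFdr.1.le, by linarith [hFdr.2]⟩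
            have hb1 := (hbtw x hx).1
            have hb2 := (hbtw x hx).2
            rw [hfoldeq]
            simp only [Function.comp_apply]
            rcases le_total Fc Fd with h | h
            · rw [hpdef, min_eq_left h] at hb1
              rw [hqdef, max_eq_right h] at hb2
              have l1 := hmono.monotoneOn hFcI hFxI hb1
              have l2 := hmono.monotoneOn hFxI hFdI hb2
              exact ⟨le_trans (min_le_left _ _) l1, le_trans l2 (le_max_right _ _)⟩
            · rw [hpdef, min_eq_right h] at hb1
              rw [hqdef, max_eq_left h] at hb2
              have l1 := hmono.monotoneOn hFdI hFxI hb1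
              have l2 := hmono.monotoneOn hFxI hFcI hb2
              exact ⟨le_trans (min_le_right _ _) l1, le_trans l2 (le_max_left _ _)⟩
          -- measure
          have hgrow : lam * (q - p) ≤ |f₀ q - f₀ p| := by
            apply mvt_expand hppos hpq (by linarith) hf₀cont hf₀diff
            intro ξ hξ
            have hξb : ξ ∈ Set.Icc (0:ℝ) b := ⟨by linarith [hξ.1], by linarith [hξ.2]⟩
            have h1 := hlamlow ξ hξb
            have h2 := hder ξ hξb
            rw [abs_of_pos (by linarith)]
            exact h1
          have habs : |f₀ q - f₀ p| = |foldComp gs' d - foldComp gs' c| := by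
            rw [hfoldeq]
            simp only [Function.comp_apply]
            rcases le_total Fc Fd with h | h
            · rw [hpdef, hqdef, min_eq_left h, max_eq_right h]
            · rw [hpdef, hqdef, min_eq_right h, max_eq_left h, abs_sub_comm]
          have hmeas' : b ≤ μ ^ n * |foldComp gs' d - foldComp gs' c| := by
            rw [← habs]
            have h1 : μ * (q - p) ≤ lam * (q - p) :=
              mul_le_mul_of_nonneg_right hμlam hlpos.le
            have h2 : μ ^ n * (μ * (q - p)) ≤ μ ^ n * |f₀ q - f₀ p| := by
              apply mul_le_mul_of_nonneg_left _ (pow_nonneg (by linarith) n)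
              linarith
            calc b ≤ μ ^ (n+1) * |Fd - Fc| := hmeas
              _ = μ ^ n * (μ * (q - p)) := by rw [← hqp_abs]; ring
              _ ≤ μ ^ n * |f₀ q - f₀ p| := h2
          exact ih gs' (by simp [hgs'def]) helem' hderiv' hrange' hbtw' hmeas'
        · -- apply an expansion block
          push_neg at hdone
          have hb'q : b' ≤ q := le_of_not_gt hql
          have hb''p : b'' < p := by
            by_contra h
            push_neg at h
            exact absurd hb'q (not_le.mpr (hdone h))
          obtain ⟨m, hmN, h1, h2⟩ := hexp p q hb''p.le hpq.le hqb
          set lb := List.replicate m f₀ ++ [f₁] with hlbdef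
          set gs' := gs ++ lb with hgs'def
          have hlbelem := hblockelem m
          rw [← hlbdef] at hlbelem
          obtain ⟨hmapL, hcontL, hdiffL⟩ := hsmooth lb hlbelem
          have hfoldeq : foldComp gs' = foldComp lb ∘ foldComp gs := by
            rw [hgs'def, foldComp_append]
          have hHeq : foldComp lb = fun y => f₁ (f₀^[m] y) := by
            rw [hlbdef]; exact hblock m
          have h2' : ∀ z ∈ Set.Icc p q, κ ≤ |derivWithin (foldComp lb) (Set.Icc 0 1) z| := by
            rw [hHeq]; exact h2
          have h1' : ∀ z ∈ Set.Icc p q, foldComp lb z ∈ Set.Ioc 0 b := by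
            rw [hHeq]; exact h1
          have helem' : ∀ g ∈ gs', g = f₀ ∨ g = f₁ := by
            intro g hg
            rcases List.mem_append.mp hg with h | h
            · exact helem g h
            · exact hlbelem g h
          have hbtwpq : ∀ x ∈ Set.Icc c d, foldComp gs x ∈ Set.Icc p q := fun x hx => hbtw x hx
          have hrange' : ∀ x ∈ Set.Icc c d, foldComp gs' x ∈ Set.Ioc 0 b := by
            intro x hx
            rw [hfoldeq]
            exact h1' _ (hbtwpq x hx)
          have hderiv' : ∀ x ∈ Set.Icc c d, κ ≤ |derivWithin (foldComp gs') (Set.Icc 0 1) x| := by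
            intro x hx
            have hxI := hIcd hx
            have hFx := hrange x hx
            have hFxI : foldComp gs x ∈ Set.Icc (0:ℝ) 1 := ⟨hFx.1.le, by linarith [hFx.2]⟩
            rw [hfoldeq, derivWithin_comp (x := x) (hdiffL _ hFxI) (hdiff x hxI) hmap,
              abs_mul]
            have hd1 := h2' _ (hbtwpq x hx)
            have hd2 := hderiv x hx
            have hd3 := mul_le_mul (le_trans (by linarith) hd1 : (1:ℝ) ≤ _) hd2 (by linarith)
              (abs_nonneg _)
            rw [one_mul] at hd3
            exact hd3
          have hanti : AntitoneOn (foldComp lb) (Set.Icc 0 1) := by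
            rw [hlbdef]; exact hblockanti m
          have hbtw' : ∀ x ∈ Set.Icc c d, min (foldComp gs' c) (foldComp gs' d) ≤ foldComp gs' x ∧
              foldComp gs' x ≤ max (foldComp gs' c) (foldComp gs' d) := by
            intro x hx
            have hFx := hrange x hx
            have hFxI : foldComp gs x ∈ Set.Icc (0:ℝ) 1 := ⟨hFx.1.le, by linarith [hFx.2]⟩
            have hFcI : Fc ∈ Set.Icc (0:ℝ) 1 := ⟨hFcr.1.le, by linarith [hFcr.2]⟩
            have hFdI : Fd ∈ Set.Icc (0:ℝ) 1 := ⟨hFdr.1.le, by linarith [hFdr.2]⟩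
            have hb1 := (hbtw x hx).1
            have hb2 := (hbtw x hx).2
            rw [hfoldeq]
            simp only [Function.comp_apply]
            rcases le_total Fc Fd with h | h
            · rw [hpdef, min_eq_left h] at hb1
              rw [hqdef, max_eq_right h] at hb2
              have l1 := hanti hFcI hFxI hb1
              have l2 := hanti hFxI hFdI hb2
              exact ⟨le_trans (min_le_right _ _) l2, le_trans l1 (le_max_left _ _)⟩
            · rw [hpdef, min_eq_right h] at hb1
              rw [hqdef, max_eq_left h] at hb2
              have l1 := hanti hFdI hFxI hb1
              have l2 := hanti hFxI hFcI hb2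
              exact ⟨le_trans (min_le_left _ _) l2, le_trans l1 (le_max_right _ _)⟩
          have hgrow : κ * (q - p) ≤ |foldComp lb q - foldComp lb p| := by
            apply mvt_expand hppos hpq (by linarith) hcontL hdiffL
            intro ξ hξ
            exact h2' ξ ⟨hξ.1.le, hξ.2.le⟩
          have habs : |foldComp lb q - foldComp lb p| = |foldComp gs' d - foldComp gs' c| := by
            rw [hfoldeq]
            simp only [Function.comp_apply]
            rcases le_total Fc Fd with h | h
            · rw [hpdef, hqdef, min_eq_left h, max_eq_right h]
            · rw [hpdef, hqdef, min_eq_right h, max_eq_left h, abs_sub_comm]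
          have hmeas' : b ≤ μ ^ n * |foldComp gs' d - foldComp gs' c| := by
            rw [← habs]
            have h1m : μ * (q - p) ≤ κ * (q - p) :=
              mul_le_mul_of_nonneg_right hμκ hlpos.le
            have h2m : μ ^ n * (μ * (q - p)) ≤ μ ^ n * |foldComp lb q - foldComp lb p| := by
              apply mul_le_mul_of_nonneg_left _ (pow_nonneg (by linarith) n)
              linarith
            calc b ≤ μ ^ (n+1) * |Fd - Fc| := hmeas
              _ = μ ^ n * (μ * (q - p)) := by rw [← hqp_abs]; ring
              _ ≤ μ ^ n * |foldComp lb q - foldComp lb p| := h2m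
          exact ih gs' (by simp [hgs'def, hlbdef]) helem' hderiv' hrange' hbtw' hmeas'
  -- initial block: apply the expansion hypothesis once to [c,d]
  obtain ⟨m₀, hm₀N, h1₀, h2₀⟩ := hexp c d hc hcd.le hd
  set gs₀ := List.replicate m₀ f₀ ++ [f₁] with hgs₀def
  have helem₀ := hblockelem m₀
  rw [← hgs₀def] at helem₀
  obtain ⟨hmap₀, hcont₀, hdiff₀⟩ := hsmooth gs₀ helem₀
  have hHeq₀ : foldComp gs₀ = fun y => f₁ (f₀^[m₀] y) := by
    rw [hgs₀def]; exact hblock m₀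
  have hderiv₀ : ∀ x ∈ Set.Icc c d, κ ≤ |derivWithin (foldComp gs₀) (Set.Icc 0 1) x| := by
    rw [hHeq₀]; exact h2₀
  have hrange₀ : ∀ x ∈ Set.Icc c d, foldComp gs₀ x ∈ Set.Ioc 0 b := by
    rw [hHeq₀]; exact h1₀
  have hanti₀ : AntitoneOn (foldComp gs₀) (Set.Icc 0 1) := by
    rw [hgs₀def]; exact hblockanti m₀
  have hbtw₀ : ∀ x ∈ Set.Icc c d, min (foldComp gs₀ c) (foldComp gs₀ d) ≤ foldComp gs₀ x ∧
      foldComp gs₀ x ≤ max (foldComp gs₀ c) (foldComp gs₀ d) := by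
    intro x hx
    have hxI := hIcd hx
    have hcI := hIcd hcmem
    have hdI := hIcd hdmem
    have l1 := hanti₀ hcI hxI hx.1
    have l2 := hanti₀ hxI hdI hx.2
    exact ⟨le_trans (min_le_right _ _) l2, le_trans l1 (le_max_left _ _)⟩
  have hgrow₀ : κ * (d - c) ≤ |foldComp gs₀ d - foldComp gs₀ c| := by
    apply mvt_expand (by linarith) hcd (by linarith) hcont₀ hdiff₀
    intro ξ hξ
    have := h2₀ ξ ⟨hξ.1.le, hξ.2.le⟩
    rw [hHeq₀]
    exact this
  have hl₀pos : 0 < |foldComp gs₀ d - foldComp gs₀ c| := by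
    have : 0 < κ * (d - c) := by nlinarith
    linarith
  obtain ⟨n₀, hn₀⟩ := pow_unbounded_of_one_lt (b / |foldComp gs₀ d - foldComp gs₀ c|) hμ1
  have hmeas₀ : b ≤ μ ^ n₀ * |foldComp gs₀ d - foldComp gs₀ c| := by
    rw [div_lt_iff₀ hl₀pos] at hn₀
    linarith
  obtain ⟨gs', hne', helem', hderiv', hcover'⟩ :=
    key n₀ gs₀ (by simp [hgs₀def]) helem₀ hderiv₀ hrange₀ hbtw₀ hmeas₀
  exact ⟨gs'.length, gs', List.length_pos_iff.mpr hne', rfl, helem', hderiv', hcover'⟩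
end
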